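/- arXiv:1002.2845 — 5 statements merged into one kernel-verified Lean document; each statement's English description precedes it below -/
import Mathlib

section
/- For all natural numbers k ≥ 1 and real numbers ν₁, ν₂ with 0 ≤ ν₁ + ν₂ and ν₁ + k·ν₂ ≤ 1 and ν₂ ≥ 0 (so that ν₁+ν₂ ≤ ν₁+k·ν₂), if U₍₁₎ ≤ ... ≤ U₍ₖ₎ are the order statistics of k i.i.d. uniform random variables on (0,1), then P(U₍₁₎ ≤ ν₁+ν₂, U₍₂₎ ≤ ν₁+2ν₂, ..., U₍ₖ₎ ≤ ν₁+kν₂) = (ν₁+ν₂)(ν₁+(k+1)ν₂)^{k-1}. -/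
open MeasureTheory Finset
open scoped Classical

noncomputable def unifM : Measure ℝ := volume.restrict (Set.Ioo (0:ℝ) 1)

noncomputable def iidUnif (k : ℕ) : Measure (Fin k → ℝ) := Measure.pi fun _ => unifM

/-- `Psi k t` is the probability that the order statistics `U_(1) ≤ ... ≤ U_(k)` of
`k` i.i.d. uniform variables on `(0,1)` satisfy `U_(j) ≤ t j` for all `1 ≤ j ≤ k`
(1-indexed thresholds), expressed via the counting characterization
`U_(j) ≤ s ↔ #{i : U i ≤ s} ≥ j`. By convention `Psi 0 t = 1`. -/
noncomputable def Psi (k : ℕ) (t : ℕ → ℝ) : ℝ :=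
  (iidUnif k {x | ∀ j ∈ Finset.Icc 1 k,
    j ≤ (Finset.univ.filter (fun i : Fin k => x i ≤ t j)).card}).toReal


noncomputable def muC (c : ℝ) (k : ℕ) : Measure (Fin k → ℝ) :=
  Measure.pi fun _ => volume.restrict (Set.Ioo c 1)

instance muC_finite (c : ℝ) (k : ℕ) : IsFiniteMeasure (muC c k) := by
  constructor
  rw [muC, Measure.pi_univ]
  simp [Measure.restrict_apply_univ, Real.volume_Ioo]

def EvS (ι : Type*) [Fintype ι] (n : ℕ) (u : ℕ → ℝ) : Set (ι → ℝ) :=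
  {y | ∀ r ∈ Finset.Icc 1 n, r ≤ (Finset.univ.filter (fun i => y i ≤ u r)).card}

lemma measurable_count {ι : Type*} [Fintype ι] (a : ℝ) :
    Measurable (fun x : ι → ℝ => (Finset.univ.filter (fun i => x i ≤ a)).card) := by
  have : (fun x : ι → ℝ => (Finset.univ.filter (fun i => x i ≤ a)).card)
      = fun x => ∑ i : ι, if x i ≤ a then 1 else 0 := by
    funext x; rw [Finset.card_filter]
  rw [this]
  exact Finset.measurable_sum _ fun i _ =>
    Measurable.ite (measurableSet_le (measurable_pi_apply i) measurable_const)
      measurable_const measurable_const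

lemma measurableSet_EvS (ι : Type*) [Fintype ι] [MeasurableSpace ι] (n : ℕ) (u : ℕ → ℝ) :
    MeasurableSet (EvS ι n u) := by
  have : EvS ι n u = ⋂ r ∈ Finset.Icc 1 n,
      (fun x : ι → ℝ => (Finset.univ.filter (fun i => x i ≤ u r)).card) ⁻¹' (Set.Ici r) := by
    ext x; simp [EvS, Set.mem_iInter]
  rw [this]
  exact MeasurableSet.biInter (Set.to_countable _)
    (fun r _ => (measurable_count (u r)) measurableSet_Ici)

lemma card_filter_subtype {k : ℕ} (S : Finset (Fin k)) (q : Fin k → Prop) :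
    (Finset.univ.filter (fun i : {i : Fin k // i ∉ S} => q i.1)).card
      = (Finset.univ.filter (fun i : Fin k => i ∉ S ∧ q i)).card := by
  apply Finset.card_bij (fun a _ => a.1)
  · intro a ha; simp at ha ⊢; exact ⟨a.2, ha⟩
  · intro a _ b _ h; exact Subtype.ext h
  · intro b hb; simp at hb; exact ⟨⟨b, hb.1⟩, by simp [hb.2], rfl⟩

lemma card_filter_equiv {α β : Type*} [Fintype α] [Fintype β] (e : α ≃ β) (q : β → Prop) :
    (Finset.univ.filter (fun b => q b)).card
      = (Finset.univ.filter (fun a => q (e a))).card := by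
  apply Finset.card_bij (fun b _ => e.symm b)
  · intro b hb; simp at hb ⊢; simpa using hb
  · intro a _ b _ h; exact e.symm.injective h
  · intro a ha; simp at ha; exact ⟨e a, by simpa using ha, by simp⟩

lemma count_split {k : ℕ} (S : Finset (Fin k)) (x : Fin k → ℝ) (a b : ℝ) (hab : a ≤ b)
    (hS : Finset.univ.filter (fun i => x i ≤ a) = S) :
    (Finset.univ.filter (fun i : Fin k => x i ≤ b)).card
      = S.card + (Finset.univ.filter (fun i : Fin k => i ∉ S ∧ x i ≤ b)).card := by
  have hsub : S ⊆ Finset.univ.filter (fun i : Fin k => x i ≤ b) := by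
    intro i hi
    rw [← hS] at hi
    simp at hi ⊢
    linarith
  have hun : Finset.univ.filter (fun i : Fin k => x i ≤ b)
      = S ∪ Finset.univ.filter (fun i : Fin k => i ∉ S ∧ x i ≤ b) := by
    ext i
    simp only [Finset.mem_filter, Finset.mem_union, Finset.mem_univ, true_and]
    constructor
    · intro h
      by_cases hi : i ∈ S
      · exact Or.inl hi
      · exact Or.inr ⟨hi, h⟩
    · rintro (h | ⟨-, h⟩)
      · have := hsub h; simpa using this
      · exact h
  rw [hun, Finset.card_union_of_disjoint]
  rw [Finset.disjoint_left]
  intro i hi hi'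
  simp at hi'
  exact hi'.1 hi

section Identity
variable {k : ℕ} (t : ℕ → ℝ) (S : Finset (Fin k))

lemma set_identity (ht : ∀ j ∈ Finset.Icc 1 k, t 1 ≤ t j) (hm : 1 ≤ S.card) :
    EvS (Fin k) k t ∩ {x | Finset.univ.filter (fun i => x i ≤ t 1) = S}
      = (MeasurableEquiv.piEquivPiSubtypeProd (fun _ : Fin k => ℝ) (· ∈ S)) ⁻¹'
        ((Set.pi Set.univ fun _ : {i // i ∈ S} => Set.Iic (t 1)) ×ˢ
          ({y : {i // i ∉ S} → ℝ | ∀ i, t 1 < y i} ∩ EvS {i // i ∉ S} (k - S.card)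
            (fun r => t (S.card + r)))) := by
  have hmk : S.card ≤ k := by simpa using Finset.card_le_card (Finset.subset_univ S)
  ext x
  simp only [Set.mem_inter_iff, Set.mem_preimage, MeasurableEquiv.piEquivPiSubtypeProd,
    MeasurableEquiv.coe_mk, Equiv.piEquivPiSubtypeProd_apply, Set.mem_prod, Set.mem_pi,
    Set.mem_univ, forall_true_left, Set.mem_setOf_eq, EvS, Set.mem_Iic]
  constructor
  · rintro ⟨hEv, hS⟩
    refine ⟨fun i => ?_, fun i => ?_, fun r hr => ?_⟩
    · have : (i : Fin k) ∈ Finset.univ.filter (fun i => x i ≤ t 1) := by rw [hS]; exact i.2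
      simpa using this
    · have : (i : Fin k) ∉ Finset.univ.filter (fun i => x i ≤ t 1) := by rw [hS]; exact i.2
      simp at this; linarith
    · simp only [Finset.mem_Icc] at hr
      have hj : S.card + r ∈ Finset.Icc 1 k := by
        simp only [Finset.mem_Icc]; omega
      have h1 := hEv (S.card + r) hj
      rw [count_split S x (t 1) (t (S.card + r)) (ht _ hj) hS] at h1
      have h2 := card_filter_subtype S (fun i => x i ≤ t (S.card + r))
      rw [h2]
      omega
  · rintro ⟨hA, hB1, hB2⟩
    have hS : Finset.univ.filter (fun i => x i ≤ t 1) = S := by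
      ext i
      simp only [Finset.mem_filter, Finset.mem_univ, true_and]
      constructor
      · intro h
        by_contra hi
        have := hB1 ⟨i, hi⟩
        simp only at this
        linarith
      · intro hi; exact hA ⟨i, hi⟩
    refine ⟨?_, hS⟩
    intro j hj
    simp only [Finset.mem_Icc] at hj
    rw [count_split S x (t 1) (t j) (ht j (by simp [Finset.mem_Icc]; omega)) hS]
    by_cases hjm : j ≤ S.card
    · omega
    · have hr : j - S.card ∈ Finset.Icc 1 (k - S.card) := by simp [Finset.mem_Icc]; omega
      have h3 := hB2 (j - S.card) hr
      have h2 := card_filter_subtype S (fun i => x i ≤ t (S.card + (j - S.card)))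
      rw [h2] at h3
      have hjj : S.card + (j - S.card) = j := by omega
      rw [hjj] at h3
      omega

end Identity

lemma pi_restrict {ι : Type*} [Fintype ι] (μ : ι → Measure ℝ) [∀ i, IsFiniteMeasure (μ i)]
    (s : ι → Set ℝ) (hs : ∀ i, MeasurableSet (s i)) :
    Measure.pi (fun i => (μ i).restrict (s i)) = (Measure.pi μ).restrict (Set.pi Set.univ s) := by
  haveI : ∀ i, SigmaFinite ((μ i).restrict (s i)) := fun i => inferInstance
  refine Measure.pi_eq (μ := fun i => (μ i).restrict (s i)) fun A hA => ?_
  rw [Measure.restrict_apply (MeasurableSet.univ_pi hA)]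
  have : Set.pi Set.univ A ∩ Set.pi Set.univ s = Set.pi Set.univ (fun i => A i ∩ s i) := by
    rw [← Set.pi_inter_distrib]
  rw [this, Measure.pi_pi]
  congr 1
  funext i
  rw [Measure.restrict_apply (hA i)]

lemma vol_aux {c a : ℝ} (hca : c ≤ a) (ha : a ≤ 1) :
    volume (Set.Iic a ∩ Set.Ioo c 1) = ENNReal.ofReal (a - c) := by
  apply le_antisymm
  · have h1 : Set.Iic a ∩ Set.Ioo c 1 ⊆ Set.Ioc c a := by
      rintro x ⟨hx1, hx2, hx3⟩; exact ⟨hx2, hx1⟩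
    calc volume (Set.Iic a ∩ Set.Ioo c 1) ≤ volume (Set.Ioc c a) := measure_mono h1
      _ = ENNReal.ofReal (a - c) := Real.volume_Ioc
  · have h2 : Set.Ioo c a ⊆ Set.Iic a ∩ Set.Ioo c 1 := by
      rintro x ⟨hx1, hx2⟩; exact ⟨le_of_lt hx2, hx1, lt_of_lt_of_le hx2 ha⟩
    calc ENNReal.ofReal (a - c) = volume (Set.Ioo c a) := Real.volume_Ioo.symm
      _ ≤ volume _ := measure_mono h2

lemma restrict_restrict_Ioo {c a : ℝ} (hca : c ≤ a) :
    (volume.restrict (Set.Ioo c 1)).restrict (Set.Ioi a) = volume.restrict (Set.Ioo a 1) := by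
  rw [Measure.restrict_restrict measurableSet_Ioi]
  congr 1
  ext x
  simp only [Set.mem_inter_iff, Set.mem_Ioi, Set.mem_Ioo]
  constructor
  · rintro ⟨h1, h2, h3⟩; exact ⟨h1, h3⟩
  · rintro ⟨h1, h2⟩; exact ⟨h1, lt_of_le_of_lt hca h1, h2⟩

lemma piCongrLeft_count {n : ℕ} {ι : Type*} [Fintype ι] (e : Fin n ≃ ι) (h : Fin n → ℝ)
    (a : ℝ) :
    (Finset.univ.filter (fun i : ι => (Equiv.piCongrLeft (fun _ => ℝ) e h) i ≤ a)).card
      = (Finset.univ.filter (fun r => h r ≤ a)).card := by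
  rw [card_filter_equiv e (fun i => (Equiv.piCongrLeft (fun _ => ℝ) e h) i ≤ a)]
  congr 1
  apply Finset.filter_congr
  intro r _
  simp [Equiv.piCongrLeft_apply_apply]

lemma piece {k : ℕ} (t : ℕ → ℝ) (S : Finset (Fin k)) (c : ℝ)
    (ht : ∀ j ∈ Finset.Icc 1 k, t 1 ≤ t j) (hm : 1 ≤ S.card)
    (hc : c ≤ t 1) (ht1 : t 1 ≤ 1) :
    muC c k (EvS (Fin k) k t ∩ {x | Finset.univ.filter (fun i => x i ≤ t 1) = S}) =
      ENNReal.ofReal (t 1 - c) ^ S.card *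
        muC (t 1) (k - S.card) (EvS (Fin (k - S.card)) (k - S.card)
          (fun r => t (S.card + r))) := by
  letI F1 : Fintype {i : Fin k // i ∈ S} := Subtype.fintype _
  letI F2 : Fintype {i : Fin k // i ∉ S} := Subtype.fintype _
  have hMP := measurePreserving_piEquivPiSubtypeProd
    (fun _ : Fin k => volume.restrict (Set.Ioo c 1)) (· ∈ S)
  have hIoi : {y : {i : Fin k // i ∉ S} → ℝ | ∀ i, t 1 < y i}
      = Set.pi Set.univ (fun _ : {i : Fin k // i ∉ S} => Set.Ioi (t 1)) := by
    ext y; simp [Set.mem_pi]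
  have hA' : MeasurableSet (Set.pi Set.univ fun _ : {i : Fin k // i ∈ S} => Set.Iic (t 1)) :=
    MeasurableSet.univ_pi fun _ => measurableSet_Iic
  have hB' : MeasurableSet ({y : {i : Fin k // i ∉ S} → ℝ | ∀ i, t 1 < y i}
      ∩ EvS {i : Fin k // i ∉ S} (k - S.card) (fun r => t (S.card + r))) := by
    rw [hIoi]
    exact (MeasurableSet.univ_pi fun _ => measurableSet_Ioi).inter (measurableSet_EvS _ _ _)
  rw [set_identity t S ht hm, muC,
    hMP.measure_preimage (hA'.prod hB').nullMeasurableSet, Measure.prod_prod]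
  congr 1
  · -- first factor
    rw [Measure.pi_pi]
    rw [Finset.prod_const]
    rw [Measure.restrict_apply measurableSet_Iic, vol_aux hc ht1]
    congr 1
    simp
  · -- second factor
    rw [hIoi, Set.inter_comm, ← Measure.restrict_apply (measurableSet_EvS _ _ _),
      ← pi_restrict _ _ (fun _ => measurableSet_Ioi)]
    have hrr : (fun _ : {i : Fin k // i ∉ S} =>
        (volume.restrict (Set.Ioo c 1)).restrict (Set.Ioi (t 1)))
        = fun _ => volume.restrict (Set.Ioo (t 1) 1) := by
      funext _; exact restrict_restrict_Ioo hc
    rw [hrr]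
    -- reindex
    have hcard : Fintype.card {i : Fin k // i ∉ S} = k - S.card := by
      simp [Fintype.card_subtype_compl]
    have e : Fin (k - S.card) ≃ {i : Fin k // i ∉ S} := (Fintype.equivFinOfCardEq hcard).symm
    have hMP2 := measurePreserving_piCongrLeft
      (fun _ : {i : Fin k // i ∉ S} => volume.restrict (Set.Ioo (t 1) 1)) e
    rw [← hMP2.measure_preimage (measurableSet_EvS _ _ _).nullMeasurableSet]
    rw [muC]
    congr 1
    ext h
    simp only [Set.mem_preimage, EvS, Set.mem_setOf_eq, MeasurableEquiv.coe_piCongrLeft]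
    constructor <;> intro H r hr <;> have := H r hr
    · rwa [piCongrLeft_count e h (t (S.card + r))] at this
    · rwa [piCongrLeft_count e h (t (S.card + r))]
lemma measurableSet_AS {k : ℕ} (a : ℝ) (S : Finset (Fin k)) :
    MeasurableSet {x : Fin k → ℝ | Finset.univ.filter (fun i => x i ≤ a) = S} := by
  have : {x : Fin k → ℝ | Finset.univ.filter (fun i => x i ≤ a) = S}
      = ⋂ i : Fin k, {x : Fin k → ℝ | i ∈ S ↔ x i ≤ a} := by
    ext x
    simp only [Set.mem_setOf_eq, Set.mem_iInter]
    constructor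
    · intro h i
      rw [← h]; simp
    · intro h
      ext i; simp [h i]
  rw [this]
  refine MeasurableSet.iInter fun i => ?_
  by_cases hi : i ∈ S
  · have : {x : Fin k → ℝ | i ∈ S ↔ x i ≤ a} = {x | x i ≤ a} := by
      ext x; simp [hi]
    rw [this]; exact measurableSet_le (measurable_pi_apply i) measurable_const
  · have : {x : Fin k → ℝ | i ∈ S ↔ x i ≤ a} = {x | ¬ x i ≤ a} := by
      ext x; simp [hi]
    rw [this]
    exact (measurableSet_le (measurable_pi_apply i) measurable_const).compl

lemma F0 (c : ℝ) (t : ℕ → ℝ) : muC c 0 (EvS (Fin 0) 0 t) = 1 := by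
  have h1 : EvS (Fin 0) 0 t = Set.univ := by
    ext x; simp [EvS]
  rw [h1, muC, Measure.pi_univ]
  simp

lemma alg0 (n : ℕ) (a b : ℝ) :
    ∑ m ∈ Finset.range (n+2), (Nat.choose (n+1) m : ℝ) * m * a^m * b^(n+1-m)
      = (n+1) * a * (a+b)^n := by
  rw [Finset.sum_range_succ']
  simp only [Nat.cast_zero, mul_zero, zero_mul, pow_zero, add_zero]
  have key : ∀ i ∈ Finset.range (n+1),
      (Nat.choose (n+1) (i+1) : ℝ) * ((i+1 : ℕ) : ℝ) * a^(i+1) * b^(n+1-(i+1))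
        = ((n+1) * a) * ((Nat.choose n i : ℝ) * a^i * b^(n-i)) := by
    intro i _
    have hc : ((n:ℝ)+1) * (Nat.choose n i : ℝ) = (Nat.choose (n+1) (i+1) : ℝ) * ((i:ℝ)+1) := by
      exact_mod_cast congrArg (Nat.cast (R := ℝ)) (Nat.add_one_mul_choose_eq n i)
    have hn : n + 1 - (i + 1) = n - i := by omega
    rw [hn, pow_succ]
    push_cast
    linear_combination (-(a^i * a * b^(n-i))) * hc
  rw [Finset.sum_congr rfl key, ← Finset.mul_sum]
  congr 1
  rw [add_pow]
  exact (Finset.sum_congr rfl fun i hi => by ring).symm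

lemma alg (k : ℕ) (hk : 1 ≤ k) (a b : ℝ) :
    ∑ m ∈ Finset.range (k+1), (Nat.choose k m : ℝ) *
      (if m = 0 then 0 else if m = k then a^k else a^m * (m*b) * (k*b)^(k-m-1))
      = a * (a + k*b)^(k-1) := by
  obtain ⟨n, rfl⟩ : ∃ n, k = n + 1 := ⟨k - 1, by omega⟩
  have hk0 : ((n:ℝ)+1) ≠ 0 := by positivity
  apply mul_left_cancel₀ hk0
  rw [Finset.mul_sum]
  have key : ∀ m ∈ Finset.range (n+2),
      ((n:ℝ)+1) * ((Nat.choose (n+1) m : ℝ) *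
        (if m = 0 then 0 else if m = n+1 then a^(n+1) else a^m * (m*b) * (((n+1):ℕ)*b)^(n+1-m-1)))
      = (Nat.choose (n+1) m : ℝ) * m * a^m * (((n:ℝ)+1)*b)^(n+1-m) := by
    intro m hm
    rcases eq_or_ne m 0 with rfl | hm0
    · simp
    rcases eq_or_ne m (n+1) with rfl | hmk
    · simp
    · rw [if_neg hm0, if_neg hmk]
      simp only [Finset.mem_range] at hm
      have h2 : n + 1 - m - 1 = n - m := by omega
      have h1 : n + 1 - m = (n - m) + 1 := by omega
      rw [h2, h1, pow_succ]
      push_cast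
      ring
  rw [Finset.sum_congr rfl key, alg0 n a (((n:ℝ)+1)*b)]
  have h3 : (n + 1 : ℕ) - 1 = n := by omega
  rw [h3]
  push_cast
  ring

lemma main_ind : ∀ k : ℕ, 1 ≤ k → ∀ c ν₁ ν₂ : ℝ, c ≤ ν₁ + ν₂ → ν₁ + k * ν₂ ≤ 1 → 0 ≤ ν₂ →
    (muC c k (EvS (Fin k) k (fun j => ν₁ + j * ν₂))).toReal
      = (ν₁ + ν₂ - c) * (ν₁ + ν₂ - c + k * ν₂) ^ (k - 1) := by
  intro k
  induction k using Nat.strong_induction_on with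
  | _ k IH =>
  intro hk c ν₁ ν₂ hc h2 h3
  set t : ℕ → ℝ := fun j => ν₁ + j * ν₂ with htdef
  have ht : ∀ j ∈ Finset.Icc 1 k, t 1 ≤ t j := by
    intro j hj
    simp only [Finset.mem_Icc] at hj
    have h1j : (1:ℝ) ≤ j := by exact_mod_cast hj.1
    simp only [htdef, Nat.cast_one]
    nlinarith
  have htk : t k ≤ 1 := h2
  have ht1 : t 1 ≤ 1 := le_trans (ht k (by simp [Finset.mem_Icc]; omega)) htk
  have hpart : EvS (Fin k) k t = ⋃ S ∈ (Finset.univ : Finset (Fin k)).powerset,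
      (EvS (Fin k) k t ∩ {x | Finset.univ.filter (fun i => x i ≤ t 1) = S}) := by
    ext x
    simp only [Set.mem_iUnion, Finset.mem_powerset, Set.mem_inter_iff, Set.mem_setOf_eq]
    constructor
    · intro h
      exact ⟨Finset.univ.filter (fun i => x i ≤ t 1), Finset.filter_subset _ _, h, rfl⟩
    · rintro ⟨S, -, h, -⟩; exact h
  have hdisj : Set.PairwiseDisjoint (↑(Finset.univ : Finset (Fin k)).powerset)
      (fun S : Finset (Fin k) =>
        EvS (Fin k) k t ∩ {x | Finset.univ.filter (fun i => x i ≤ t 1) = S}) := by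
    intro S _ S' _ hne
    rw [Function.onFun, Set.disjoint_left]
    rintro x ⟨-, h1⟩ ⟨-, h2'⟩
    exact hne (h1 ▸ h2' ▸ rfl)
  rw [hpart, measure_biUnion_finset hdisj (fun S _ =>
    (measurableSet_EvS _ _ _).inter (measurableSet_AS _ _))]
  rw [ENNReal.toReal_sum (fun S _ => measure_ne_top _ _)]
  have hterm : ∀ S ∈ (Finset.univ : Finset (Fin k)).powerset,
      (muC c k (EvS (Fin k) k t ∩
        {x | Finset.univ.filter (fun i => x i ≤ t 1) = S})).toReal
      = (if S.card = 0 then 0 else if S.card = k then (ν₁ + ν₂ - c)^k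
          else (ν₁ + ν₂ - c)^S.card * (S.card * ν₂) * ((k:ℝ) * ν₂)^(k - S.card - 1)) := by
    intro S _
    have hmk : S.card ≤ k := by simpa using Finset.card_le_card (Finset.subset_univ S)
    rcases Nat.eq_zero_or_pos S.card with hS0 | hSpos
    · rw [if_pos hS0]
      have hSe : S = ∅ := Finset.card_eq_zero.mp hS0
      have : EvS (Fin k) k t ∩ {x | Finset.univ.filter (fun i => x i ≤ t 1) = S} = ∅ := by
        subst hSe
        ext x
        simp only [Set.mem_inter_iff, Set.mem_setOf_eq, Set.mem_empty_iff_false, iff_false,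
          not_and, EvS]
        intro hEv hfil
        have := hEv 1 (by simp [Finset.mem_Icc]; omega)
        rw [hfil] at this
        simp at this
      rw [this]
      simp
    · rw [if_neg (by omega)]
      have hc1 : c ≤ t 1 := by simpa [htdef] using hc
      rw [piece t S c ht hSpos hc1 ht1]
      have htoReal : (ENNReal.ofReal (t 1 - c) ^ S.card *
          muC (t 1) (k - S.card) (EvS (Fin (k - S.card)) (k - S.card)
            (fun r => t (S.card + r)))).toReal
          = (t 1 - c)^S.card * (muC (t 1) (k - S.card) (EvS (Fin (k - S.card)) (k - S.card)
            (fun r => t (S.card + r)))).toReal := by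
        rw [ENNReal.toReal_mul, ENNReal.toReal_pow, ENNReal.toReal_ofReal (by linarith)]
      rw [htoReal]
      rcases eq_or_lt_of_le hmk with hSk | hSlt
      · rw [if_pos hSk]
        have h0 : k - S.card = 0 := by omega
        rw [h0]
        rw [F0 (t 1)]
        simp only [ENNReal.toReal_one, mul_one]
        rw [hSk]
        simp [htdef]
      · rw [if_neg (by omega)]
        have hfun : (fun r : ℕ => t (S.card + r)) = fun r : ℕ => (ν₁ + S.card * ν₂) + r * ν₂ := by
          funext r
          simp only [htdef]
          push_cast
          ring
        rw [hfun]
        have hkm1 : 1 ≤ k - S.card := by omega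
        have hcast : ((k - S.card : ℕ) : ℝ) = (k : ℝ) - S.card := by
          rw [Nat.cast_sub hmk]
        have hIH := IH (k - S.card) (by omega) hkm1 (t 1) (ν₁ + S.card * ν₂) ν₂
          (by simp only [htdef]; push_cast; nlinarith [show (1:ℝ) ≤ S.card by exact_mod_cast hSpos])
          (by rw [hcast]; linarith)
          h3
        rw [hIH]
        simp only [htdef, Nat.cast_one, hcast]
        ring
  rw [Finset.sum_congr rfl hterm]
  rw [Finset.sum_powerset]
  have hinner : ∀ m ∈ Finset.range ((Finset.univ : Finset (Fin k)).card + 1),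
      ∑ S ∈ Finset.powersetCard m (Finset.univ : Finset (Fin k)),
        (if S.card = 0 then 0 else if S.card = k then (ν₁ + ν₂ - c)^k
          else (ν₁ + ν₂ - c)^S.card * (S.card * ν₂) * ((k:ℝ) * ν₂)^(k - S.card - 1))
      = (Nat.choose k m : ℝ) * (if m = 0 then 0 else if m = k then (ν₁ + ν₂ - c)^k
          else (ν₁ + ν₂ - c)^m * (m * ν₂) * ((k:ℝ) * ν₂)^(k - m - 1)) := by
    intro m _
    rw [Finset.sum_congr rfl (fun S hS => by
      rw [(Finset.mem_powersetCard.mp hS).2])]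
    rw [Finset.sum_const, Finset.card_powersetCard, Finset.card_univ, Fintype.card_fin,
      nsmul_eq_mul]
  rw [Finset.sum_congr rfl hinner]
  have hcardu : (Finset.univ : Finset (Fin k)).card = k := by
    rw [Finset.card_univ, Fintype.card_fin]
  rw [hcardu]
  exact alg k hk (ν₁ + ν₂ - c) ν₂

/-- Finner–Roters identity: for a linearly spaced threshold `t_j = ν₁ + j·ν₂`,
`Ψ_k(ν₁+ν₂, ..., ν₁+kν₂) = (ν₁+ν₂)(ν₁+(k+1)ν₂)^(k-1)`. -/
theorem psi_linear (k : ℕ) (hk : 1 ≤ k) (ν₁ ν₂ : ℝ) (h1 : 0 ≤ ν₁ + ν₂)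
    (h2 : ν₁ + k * ν₂ ≤ 1) (h3 : 0 ≤ ν₂) :
    Psi k (fun j => ν₁ + j * ν₂) = (ν₁ + ν₂) * (ν₁ + (k + 1) * ν₂) ^ (k - 1) := by
  have h := main_ind k hk 0 ν₁ ν₂ (by linarith) h2 h3
  have heq : Psi k (fun j => ν₁ + j * ν₂)
      = (muC 0 k (EvS (Fin k) k (fun j => ν₁ + j * ν₂))).toReal := rfl
  rw [heq, h, sub_zero]
  congr 1
  ring
end

section
/- Bolshev's recursion: for any nondecreasing threshold t = (t₁,...,tₖ) ∈ [0,1]^k, Ψₖ(t₁,...,tₖ) = 1 − Σ_{i=1}^{k} C(k,i) (1−t_{k−i+1})^i Ψ_{k−i}(t₁,...,t_{k−i}), where Ψ denotes the joint c.d.f. of order statistics of i.i.d. uniform variables. -/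
open MeasureTheory Finset
open scoped Classical

/-! ### Auxiliary material -/

instance : IsProbabilityMeasure unifM := ⟨by simp [unifM, Real.volume_Ioo]⟩

instance iidUnif_prob (k : ℕ) : IsProbabilityMeasure (iidUnif k) := by
  unfold iidUnif; infer_instance

/-- The counting event over an arbitrary finite index type. -/
def cntSet (ι : Type*) [Fintype ι] (n : ℕ) (t : ℕ → ℝ) : Set (ι → ℝ) :=
  {x | ∀ j ∈ Finset.Icc 1 n, j ≤ (Finset.univ.filter (fun l : ι => x l ≤ t j)).card}

lemma measurable_cnt {ι : Type*} [Fintype ι] (c : ℝ) :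
    Measurable (fun x : ι → ℝ => (Finset.univ.filter (fun l : ι => x l ≤ c)).card) := by
  simp_rw [Finset.card_filter]
  exact Finset.measurable_sum _ fun l _ => Measurable.ite
    (measurableSet_le (measurable_pi_apply l) measurable_const)
    measurable_const measurable_const

lemma measurableSet_cntSet (ι : Type*) [Fintype ι] (n : ℕ) (t : ℕ → ℝ) :
    MeasurableSet (cntSet ι n t) := by
  have h : cntSet ι n t = ⋂ j ∈ Finset.Icc 1 n,
      (fun x : ι → ℝ => (Finset.univ.filter (fun l : ι => x l ≤ t j)).card) ⁻¹' (Set.Ici j) := by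
    ext x; simp [cntSet, Set.mem_Ici]
  rw [h]
  exact MeasurableSet.biInter (Set.to_countable _) fun j _ =>
    (measurable_cnt (t j)) measurableSet_Ici

lemma Psi_eq (k : ℕ) (t : ℕ → ℝ) : Psi k t = (iidUnif k (cntSet (Fin k) k t)).toReal := rfl

/-- The crossing event attached to a nonempty set `S` of indices: all coordinates in `S`
exceed `t (k - |S| + 1)` and the coordinates outside `S` satisfy the counting constraints
for the first `k - |S|` thresholds. -/
def Ev (k : ℕ) (t : ℕ → ℝ) (S : Finset (Fin k)) : Set (Fin k → ℝ) :=
  {x | (∀ l ∈ S, t (k - S.card + 1) < x l) ∧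
       ∀ j ∈ Finset.Icc 1 (k - S.card),
         j ≤ (Finset.univ.filter (fun l : Fin k => l ∉ S ∧ x l ≤ t j)).card}

lemma measurableSet_Ev (k : ℕ) (t : ℕ → ℝ) (S : Finset (Fin k)) :
    MeasurableSet (Ev k t S) := by
  have h1 : MeasurableSet {x : Fin k → ℝ | ∀ l ∈ S, t (k - S.card + 1) < x l} := by
    have : {x : Fin k → ℝ | ∀ l ∈ S, t (k - S.card + 1) < x l} =
        ⋂ l ∈ S, (fun x : Fin k → ℝ => x l) ⁻¹' Set.Ioi (t (k - S.card + 1)) := by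
      ext x; simp
    rw [this]
    exact MeasurableSet.biInter (Set.to_countable _) fun l _ =>
      (measurable_pi_apply l) measurableSet_Ioi
  have h2 : MeasurableSet {x : Fin k → ℝ | ∀ j ∈ Finset.Icc 1 (k - S.card),
      j ≤ (Finset.univ.filter (fun l : Fin k => l ∉ S ∧ x l ≤ t j)).card} := by
    have key : ∀ c : ℝ, Measurable (fun x : Fin k → ℝ =>
        (Finset.univ.filter (fun l : Fin k => l ∉ S ∧ x l ≤ c)).card) := by
      intro c
      simp_rw [Finset.card_filter]
      refine Finset.measurable_sum _ fun l _ => Measurable.ite ?_ measurable_const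
        measurable_const
      have : {x : Fin k → ℝ | l ∉ S ∧ x l ≤ c} =
          {x : Fin k → ℝ | l ∉ S} ∩ {x | x l ≤ c} := rfl
      rw [this]
      exact (MeasurableSet.const _).inter
        (measurableSet_le (measurable_pi_apply l) measurable_const)
    have : {x : Fin k → ℝ | ∀ j ∈ Finset.Icc 1 (k - S.card),
        j ≤ (Finset.univ.filter (fun l : Fin k => l ∉ S ∧ x l ≤ t j)).card} =
        ⋂ j ∈ Finset.Icc 1 (k - S.card),
          (fun x : Fin k → ℝ =>
            (Finset.univ.filter (fun l : Fin k => l ∉ S ∧ x l ≤ t j)).card) ⁻¹' Set.Ici j := by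
      ext x; simp [Set.mem_Ici]
    rw [this]
    exact MeasurableSet.biInter (Set.to_countable _) fun j _ => (key (t j)) measurableSet_Ici
  exact h1.inter h2

/-- Cardinality of a filter over a subtype vs the ambient type. -/
lemma card_subtype_filter {α : Type*} [Fintype α] (p q : α → Prop)
    {ft : Fintype {a // p a}} {d1 : DecidablePred (fun l : {a // p a} => q l.1)}
    {d2 : DecidablePred (fun a => p a ∧ q a)} :
    (@Finset.filter _ (fun l : {a // p a} => q l.1) d1 (@Finset.univ _ ft)).card =
      (@Finset.filter _ (fun a => p a ∧ q a) d2 Finset.univ).card := by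
  classical
  apply Finset.card_bij (fun l _ => l.1)
  · intro a ha
    simp only [Finset.mem_filter, Finset.mem_univ, true_and] at ha ⊢
    exact ⟨a.2, ha⟩
  · intro a _ a' _ h; exact Subtype.ext h
  · intro b hb
    simp only [Finset.mem_filter, Finset.mem_univ, true_and] at hb
    exact ⟨⟨b, hb.1⟩, by simp [hb.2], rfl⟩

lemma card_filter_comp_equiv {α β : Type*} [Fintype α] [Fintype β] (e : α ≃ β)
    (q : β → Prop) {d1 : DecidablePred (fun a => q (e a))} {d2 : DecidablePred q} :
    (@Finset.filter _ (fun a => q (e a)) d1 Finset.univ).card =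
      (@Finset.filter _ q d2 Finset.univ).card := by
  classical
  apply Finset.card_bij (fun a _ => e a)
  · intro a ha
    simp only [Finset.mem_filter, Finset.mem_univ, true_and] at ha ⊢
    exact ha
  · intro a _ a' _ h; exact e.injective h
  · intro b hb
    simp only [Finset.mem_filter, Finset.mem_univ, true_and] at hb
    exact ⟨e.symm b, by simpa using hb, by simp⟩

section Combinatorics

variable {k : ℕ} {t : ℕ → ℝ}

/-- Count at the critical threshold is too small for `x ∈ Ev k t S`. -/
lemma Ev_cnt_lt (S : Finset (Fin k)) {x : Fin k → ℝ} (hx : x ∈ Ev k t S) :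
    (Finset.univ.filter (fun l : Fin k => x l ≤ t (k - S.card + 1))).card ≤ k - S.card := by
  have hsub : Finset.univ.filter (fun l : Fin k => x l ≤ t (k - S.card + 1)) ⊆ Sᶜ := by
    intro l hl
    simp only [Finset.mem_filter, Finset.mem_univ, true_and] at hl
    simp only [Finset.mem_compl]
    intro hlS
    exact absurd hl (not_le.2 (hx.1 l hlS))
  calc (Finset.univ.filter (fun l : Fin k => x l ≤ t (k - S.card + 1))).card
      ≤ Sᶜ.card := Finset.card_le_card hsub
    _ = k - S.card := by rw [Finset.card_compl, Fintype.card_fin]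

/-- For `x ∈ Ev k t S`, early counts are large. -/
lemma Ev_cnt_ge (S : Finset (Fin k)) {x : Fin k → ℝ} (hx : x ∈ Ev k t S)
    {j : ℕ} (hj : j ∈ Finset.Icc 1 (k - S.card)) :
    j ≤ (Finset.univ.filter (fun l : Fin k => x l ≤ t j)).card := by
  refine le_trans (hx.2 j hj) (Finset.card_le_card ?_)
  intro l hl
  simp only [Finset.mem_filter, Finset.mem_univ, true_and] at hl ⊢
  exact hl.2

/-- `S` is recoverable from `x ∈ Ev k t S`. -/
lemma Ev_recover (ht : MonotoneOn t (Set.Icc 1 k)) (S : Finset (Fin k))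
    (hS : S.Nonempty) {x : Fin k → ℝ} (hx : x ∈ Ev k t S) :
    S = Finset.univ.filter (fun l : Fin k => t (k - S.card + 1) < x l) := by
  have hik : S.card ≤ k := by
    simpa using Finset.card_le_card (Finset.subset_univ S)
  have hi1 : 1 ≤ S.card := Finset.card_pos.2 hS
  apply Finset.Subset.antisymm
  · intro l hl
    simp only [Finset.mem_filter, Finset.mem_univ, true_and]
    exact hx.1 l hl
  · intro l hl
    simp only [Finset.mem_filter, Finset.mem_univ, true_and] at hl
    by_contra hlS
    -- then S.card < k
    have hlt : S.card < k := by
      rcases lt_or_eq_of_le hik with h | h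
      · exact h
      · exfalso
        have : S = Finset.univ := Finset.eq_univ_of_card S (by rw [h, Fintype.card_fin])
        exact hlS (this ▸ Finset.mem_univ l)
    -- all coordinates outside S are ≤ t (k - S.card)
    have hmem : (k - S.card) ∈ Finset.Icc 1 (k - S.card) := by
      simp only [Finset.mem_Icc]; omega
    have h1 := hx.2 (k - S.card) hmem
    have hsub : Finset.univ.filter (fun m : Fin k => m ∉ S ∧ x m ≤ t (k - S.card)) ⊆ Sᶜ := by
      intro m hm
      simp only [Finset.mem_filter, Finset.mem_univ, true_and] at hm
      simpa [Finset.mem_compl] using hm.1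
    have hcard : Sᶜ.card = k - S.card := by rw [Finset.card_compl, Fintype.card_fin]
    have heq : Finset.univ.filter (fun m : Fin k => m ∉ S ∧ x m ≤ t (k - S.card)) = Sᶜ := by
      apply Finset.eq_of_subset_of_card_le hsub
      rw [hcard]
      exact le_trans h1 (Finset.card_le_card (Finset.Subset.refl _))
    have hlc : l ∈ Sᶜ := by simpa [Finset.mem_compl] using hlS
    rw [← heq] at hlc
    simp only [Finset.mem_filter, Finset.mem_univ, true_and] at hlc
    have hmono : t (k - S.card) ≤ t (k - S.card + 1) := by
      apply ht
      · constructor <;> omega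
      · constructor <;> omega
      · omega
    exact absurd (le_trans hlc.2 hmono) (not_le.2 hl)

/-- Crossing events are pairwise disjoint. -/
lemma Ev_disjoint (ht : MonotoneOn t (Set.Icc 1 k)) {S S' : Finset (Fin k)}
    (hS : S.Nonempty) (hS' : S'.Nonempty) (hne : S ≠ S') :
    Ev k t S ∩ Ev k t S' = ∅ := by
  by_contra h
  obtain ⟨x, hxS, hxS'⟩ := Set.nonempty_iff_ne_empty.2 h
  have hik : S.card ≤ k := by simpa using Finset.card_le_card (Finset.subset_univ S)
  have hik' : S'.card ≤ k := by simpa using Finset.card_le_card (Finset.subset_univ S')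
  have hi1 : 1 ≤ S.card := Finset.card_pos.2 hS
  have hi1' : 1 ≤ S'.card := Finset.card_pos.2 hS'
  -- first, the cardinalities must coincide
  have hcards : S.card = S'.card := by
    by_contra hcc
    -- wlog via cases
    rcases Nat.lt_or_ge S.card S'.card with hlt | hge
    · -- S.card < S'.card
      have hj : (k - S'.card + 1) ∈ Finset.Icc 1 (k - S.card) := by
        simp only [Finset.mem_Icc]; omega
      have h1 := Ev_cnt_ge S hxS hj
      have h2 := Ev_cnt_lt S' hxS'
      omega
    · have hlt : S'.card < S.card := by omega
      have hj : (k - S.card + 1) ∈ Finset.Icc 1 (k - S'.card) := by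
        simp only [Finset.mem_Icc]; omega
      have h1 := Ev_cnt_ge S' hxS' hj
      have h2 := Ev_cnt_lt S hxS
      omega
  apply hne
  rw [Ev_recover ht S hS hxS, Ev_recover ht S' hS' hxS', hcards]

/-- The complement of the counting event is the union of the crossing events. -/
lemma compl_cntSet_eq (ht : MonotoneOn t (Set.Icc 1 k)) :
    (cntSet (Fin k) k t)ᶜ =
      ⋃ S ∈ Finset.univ.filter (fun S : Finset (Fin k) => S.Nonempty), Ev k t S := by
  ext x
  simp only [Set.mem_compl_iff, cntSet, Set.mem_setOf_eq, Set.mem_iUnion, Finset.mem_filter,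
    Finset.mem_univ, true_and, not_forall, exists_prop]
  constructor
  · rintro ⟨j₀, hj₀, hj₀'⟩
    -- take the least failing index
    set F := (Finset.Icc 1 k).filter
      (fun j => (Finset.univ.filter (fun l : Fin k => x l ≤ t j)).card < j) with hF
    have hFne : F.Nonempty := ⟨j₀, by simp only [hF, Finset.mem_filter]; exact ⟨hj₀, by omega⟩⟩
    set j := F.min' hFne with hjdef
    have hjF : j ∈ F := Finset.min'_mem F hFne
    have hjIcc : j ∈ Finset.Icc 1 k := (Finset.mem_filter.1 hjF).1
    have hjlt : (Finset.univ.filter (fun l : Fin k => x l ≤ t j)).card < j :=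
      (Finset.mem_filter.1 hjF).2
    have hjmin : ∀ j' ∈ Finset.Icc 1 k, j' < j →
        j' ≤ (Finset.univ.filter (fun l : Fin k => x l ≤ t j')).card := by
      intro j' hj' hlt
      by_contra hc
      have : j' ∈ F := Finset.mem_filter.2 ⟨hj', by omega⟩
      exact absurd (Finset.min'_le F j' this) (by omega)
    obtain ⟨hj1, hjk⟩ := Finset.mem_Icc.1 hjIcc
    -- the count at j is exactly j - 1
    have hcnt : (Finset.univ.filter (fun l : Fin k => x l ≤ t j)).card = j - 1 := by
      rcases Nat.lt_or_ge j 2 with h1 | h1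
      · omega
      · have hj'Icc : (j - 1) ∈ Finset.Icc 1 k := by simp only [Finset.mem_Icc]; omega
        have h2 := hjmin (j - 1) hj'Icc (by omega)
        have hmono : t (j - 1) ≤ t j := by
          apply ht
          · exact ⟨by omega, by omega⟩
          · exact ⟨by omega, by omega⟩
          · omega
        have hsub : Finset.univ.filter (fun l : Fin k => x l ≤ t (j - 1)) ⊆
            Finset.univ.filter (fun l : Fin k => x l ≤ t j) := by
          intro l hl
          simp only [Finset.mem_filter, Finset.mem_univ, true_and] at hl ⊢
          exact le_trans hl hmono
        have := Finset.card_le_card hsub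
        omega
    -- the witness set
    refine ⟨Finset.univ.filter (fun l : Fin k => t j < x l), ?_, ?_, ?_⟩
    · -- nonempty
      have hcompl : Finset.univ.filter (fun l : Fin k => t j < x l) =
          (Finset.univ.filter (fun l : Fin k => x l ≤ t j))ᶜ := by
        ext l
        simp [not_le]
      rw [← Finset.card_pos, hcompl, Finset.card_compl, Fintype.card_fin, hcnt]
      omega
    all_goals {
      have hcompl : Finset.univ.filter (fun l : Fin k => t j < x l) =
          (Finset.univ.filter (fun l : Fin k => x l ≤ t j))ᶜ := by
        ext l
        simp [not_le]
      have hScard : (Finset.univ.filter (fun l : Fin k => t j < x l)).card = k - j + 1 := by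
        rw [hcompl, Finset.card_compl, Fintype.card_fin, hcnt]
        omega
      have hidx : k - (Finset.univ.filter (fun l : Fin k => t j < x l)).card + 1 = j := by
        rw [hScard]; omega
      first
      | -- first component of Ev
        ( rw [hidx]
          intro l hl
          simpa using hl )
      | -- second component of Ev
        ( rw [hScard]
          intro j' hj'
          obtain ⟨hj'1, hj'2⟩ := Finset.mem_Icc.1 hj'
          have hj'k : j' ≤ k := by omega
          have hj'j : j' < j := by omega
          have hfeq : Finset.univ.filter
              (fun l : Fin k => l ∉ Finset.univ.filter (fun l : Fin k => t j < x l)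
                ∧ x l ≤ t j') =
              Finset.univ.filter (fun l : Fin k => x l ≤ t j') := by
            ext l
            simp only [Finset.mem_filter, Finset.mem_univ, true_and, and_iff_right_iff_imp,
              not_lt]
            intro hlle
            have hmono : t j' ≤ t j := by
              apply ht
              · exact ⟨by omega, by omega⟩
              · exact ⟨by omega, by omega⟩
              · omega
            exact le_trans hlle hmono
          rw [hfeq]
          exact hjmin j' (Finset.mem_Icc.2 ⟨hj'1, hj'k⟩) hj'j )
    }
  · rintro ⟨S, hSne, hxS⟩
    have hik : S.card ≤ k := by simpa using Finset.card_le_card (Finset.subset_univ S)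
    have hi1 : 1 ≤ S.card := Finset.card_pos.2 hSne
    refine ⟨k - S.card + 1, by simp only [Finset.mem_Icc]; omega, ?_⟩
    have := Ev_cnt_lt S hxS
    omega

end Combinatorics

/-! ### Measure computations -/

lemma unifM_Ioi {c : ℝ} (hc : 0 ≤ c) : unifM (Set.Ioi c) = ENNReal.ofReal (1 - c) := by
  rw [unifM, Measure.restrict_apply measurableSet_Ioi]
  have h : Set.Ioi c ∩ Set.Ioo (0:ℝ) 1 = Set.Ioo c 1 := by
    ext y
    constructor
    · rintro ⟨h1, _, h3⟩; exact ⟨h1, h3⟩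
    · rintro ⟨h1, h2⟩; exact ⟨h1, lt_of_le_of_lt hc h1, h2⟩
  rw [h, Real.volume_Ioo]

lemma card_univ_subtype_mem {α : Type*} (S : Finset α) {i : Fintype {a // a ∈ S}} :
    (@Finset.univ _ i).card = S.card := by
  apply Finset.card_bij (fun l _ => l.1)
  · intro a _; exact a.2
  · intro a _ a' _ h; exact Subtype.ext h
  · intro b hb; exact ⟨⟨b, hb⟩, Finset.mem_univ _, rfl⟩

lemma card_univ_subtype_not_mem {k : ℕ} (S : Finset (Fin k))
    {i : Fintype {a : Fin k // ¬ a ∈ S}} :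
    (@Finset.univ _ i).card = k - S.card := by
  have h1 : (@Finset.univ _ i).card = Sᶜ.card := by
    apply Finset.card_bij (fun l _ => l.1)
    · intro a _; simpa [Finset.mem_compl] using a.2
    · intro a _ a' _ h; exact Subtype.ext h
    · intro b hb; exact ⟨⟨b, by simpa [Finset.mem_compl] using hb⟩, Finset.mem_univ _, rfl⟩
  rw [h1, Finset.card_compl, Fintype.card_fin]

lemma measure_Ev (k : ℕ) (t : ℕ → ℝ) (S : Finset (Fin k))
    (hc0 : 0 ≤ t (k - S.card + 1)) :
    iidUnif k (Ev k t S) =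
      ENNReal.ofReal (1 - t (k - S.card + 1)) ^ S.card *
        iidUnif (k - S.card) (cntSet (Fin (k - S.card)) (k - S.card) t) := by
  classical
  have hmp := measurePreserving_piEquivPiSubtypeProd (fun _ : Fin k => unifM)
    (fun l => l ∈ S)
  have hEv : Ev k t S =
      (MeasurableEquiv.piEquivPiSubtypeProd (fun _ : Fin k => ℝ) (fun l => l ∈ S)) ⁻¹'
        ((Set.univ.pi fun _ : {l : Fin k // l ∈ S} => Set.Ioi (t (k - S.card + 1))) ×ˢ
          (cntSet {l : Fin k // ¬ l ∈ S} (k - S.card) t)) := by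
    ext x
    constructor
    · rintro ⟨h1, h2⟩
      constructor
      · intro l _
        exact h1 l.1 l.2
      · intro j hj
        show j ≤ (Finset.univ.filter (fun l : {l : Fin k // ¬ l ∈ S} => x l.1 ≤ t j)).card
        rw [card_subtype_filter (fun l : Fin k => ¬ l ∈ S) (fun l : Fin k => x l ≤ t j)]
        exact h2 j hj
    · rintro ⟨h1, h2⟩
      constructor
      · intro l hl
        exact h1 ⟨l, hl⟩ (Set.mem_univ _)
      · intro j hj
        rw [← card_subtype_filter (fun l : Fin k => ¬ l ∈ S) (fun l : Fin k => x l ≤ t j)]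
        exact h2 j hj
  have hcard : Fintype.card {l : Fin k // ¬ l ∈ S} = k - S.card := by
    rw [← Finset.card_univ, card_univ_subtype_not_mem]
  set f : Fin (k - S.card) ≃ {l : Fin k // ¬ l ∈ S} := (Fintype.equivFinOfCardEq hcard).symm
    with hf
  have hmp2 := measurePreserving_piCongrLeft (fun _ : {l : Fin k // ¬ l ∈ S} => unifM) f
  have happ : ∀ (w : Fin (k - S.card) → ℝ) (l : {l : Fin k // ¬ l ∈ S}),
      (MeasurableEquiv.piCongrLeft (fun _ => ℝ) f) w l = w (f.symm l) := by
    intro w l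
    rw [MeasurableEquiv.coe_piCongrLeft, Equiv.piCongrLeft_apply_eq_cast]
    exact eq_of_heq (cast_heq _ _)
  have h2 : (Measure.pi fun _ : {l : Fin k // ¬ l ∈ S} => unifM)
      (cntSet {l : Fin k // ¬ l ∈ S} (k - S.card) t) =
      iidUnif (k - S.card) (cntSet (Fin (k - S.card)) (k - S.card) t) := by
    rw [← hmp2.measure_preimage_equiv]
    show iidUnif (k - S.card) _ = _
    congr 1
    ext w
    simp only [cntSet, Set.mem_preimage, Set.mem_setOf_eq]
    refine forall_congr' fun j => imp_congr_right fun hj => ?_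
    have hfe : (Finset.univ.filter (fun l : {l : Fin k // ¬ l ∈ S} =>
        (MeasurableEquiv.piCongrLeft (fun _ => ℝ) f) w l ≤ t j)) =
        (Finset.univ.filter (fun l : {l : Fin k // ¬ l ∈ S} => w (f.symm l) ≤ t j)) := by
      ext l
      simp [happ]
    rw [hfe, card_filter_comp_equiv f.symm (fun m => w m ≤ t j)]
  have hAmeas : MeasurableSet
      ((Set.univ.pi fun _ : {l : Fin k // l ∈ S} => Set.Ioi (t (k - S.card + 1))) ×ˢ
        (cntSet {l : Fin k // ¬ l ∈ S} (k - S.card) t)) :=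
    (MeasurableSet.univ_pi fun _ => measurableSet_Ioi).prod
      (measurableSet_cntSet _ _ _)
  have key : ∀ (ft : Fintype {l : Fin k // l ∈ S}),
      (@Measure.pi {l : Fin k // l ∈ S} (fun _ => ℝ) ft _ (fun _ => unifM))
        (Set.univ.pi fun _ : {l : Fin k // l ∈ S} =>
          Set.Ioi (t (k - S.card + 1)) : Set ({l : Fin k // l ∈ S} → ℝ)) =
        ENNReal.ofReal (1 - t (k - S.card + 1)) ^ S.card := by
    intro ft
    refine (@Measure.pi_pi {l : Fin k // l ∈ S} (fun _ => ℝ) ft _ (fun _ => unifM) _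
      (fun _ => Set.Ioi (t (k - S.card + 1)))).trans ?_
    rw [Finset.prod_const, card_univ_subtype_mem, unifM_Ioi hc0]
  rw [show iidUnif k (Ev k t S) =
      (Measure.pi fun _ : Fin k => unifM) (Ev k t S) from rfl, hEv,
    hmp.measure_preimage hAmeas.nullMeasurableSet, Measure.prod_prod, h2, key _]

/-- Bolshev's recursion for the joint c.d.f. of uniform order statistics. -/
theorem bolshev (k : ℕ) (t : ℕ → ℝ)
    (ht : MonotoneOn t (Set.Icc 1 k))
    (ht01 : ∀ j ∈ Set.Icc 1 k, t j ∈ Set.Icc (0:ℝ) 1) :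
    Psi k t = 1 - ∑ i ∈ Finset.Icc 1 k,
      (k.choose i : ℝ) * (1 - t (k - i + 1)) ^ i * Psi (k - i) t := by
  classical
  set T := Finset.univ.filter (fun S : Finset (Fin k) => S.Nonempty) with hT
  have hdisj : (↑T : Set (Finset (Fin k))).PairwiseDisjoint (Ev k t) := by
    intro S hS S' hS' hne
    simp only [hT, Finset.coe_filter, Set.mem_setOf_eq, Finset.mem_univ, true_and] at hS hS'
    exact Set.disjoint_iff_inter_eq_empty.2 (Ev_disjoint ht hS hS' hne)
  have hmeas : ∀ S ∈ T, MeasurableSet (Ev k t S) := fun S _ => measurableSet_Ev k t S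
  have hsum : iidUnif k ((cntSet (Fin k) k t)ᶜ) = ∑ S ∈ T, iidUnif k (Ev k t S) := by
    rw [compl_cntSet_eq ht]
    exact measure_biUnion_finset hdisj hmeas
  have hterm : ∀ S ∈ T, iidUnif k (Ev k t S) =
      ENNReal.ofReal (1 - t (k - S.card + 1)) ^ S.card *
        iidUnif (k - S.card) (cntSet (Fin (k - S.card)) (k - S.card) t) := by
    intro S hS
    simp only [hT, Finset.mem_filter, Finset.mem_univ, true_and] at hS
    apply measure_Ev
    have hik : S.card ≤ k := by simpa using Finset.card_le_card (Finset.subset_univ S)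
    have hi1 : 1 ≤ S.card := Finset.card_pos.2 hS
    exact (ht01 (k - S.card + 1) (Set.mem_Icc.2 ⟨by omega, by omega⟩)).1
  have hfib : ∑ S ∈ T, iidUnif k (Ev k t S) =
      ∑ i ∈ Finset.Icc 1 k, ∑ S ∈ T.filter (fun S => S.card = i),
        iidUnif k (Ev k t S) := by
    refine (Finset.sum_fiberwise_of_maps_to ?_ _).symm
    intro S hS
    simp only [hT, Finset.mem_filter, Finset.mem_univ, true_and] at hS
    have hik : S.card ≤ k := by simpa using Finset.card_le_card (Finset.subset_univ S)
    have hi1 : 1 ≤ S.card := Finset.card_pos.2 hS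
    exact Finset.mem_Icc.2 ⟨hi1, hik⟩
  have hinner : ∀ i ∈ Finset.Icc 1 k,
      ∑ S ∈ T.filter (fun S => S.card = i), iidUnif k (Ev k t S) =
      (k.choose i : ENNReal) * (ENNReal.ofReal (1 - t (k - i + 1)) ^ i *
        iidUnif (k - i) (cntSet (Fin (k - i)) (k - i) t)) := by
    intro i hi
    obtain ⟨hi1, hik⟩ := Finset.mem_Icc.1 hi
    have hconst : ∀ S ∈ T.filter (fun S => S.card = i), iidUnif k (Ev k t S) =
        ENNReal.ofReal (1 - t (k - i + 1)) ^ i *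
          iidUnif (k - i) (cntSet (Fin (k - i)) (k - i) t) := by
      intro S hS
      obtain ⟨hST, hcard⟩ := Finset.mem_filter.1 hS
      rw [hterm S hST, hcard]
    rw [Finset.sum_congr rfl hconst, Finset.sum_const]
    have hTf : T.filter (fun S => S.card = i) =
        Finset.univ.filter (fun S : Finset (Fin k) => S.card = i) := by
      simp only [hT, Finset.filter_filter]
      ext S
      simp only [Finset.mem_filter, Finset.mem_univ, true_and]
      constructor
      · rintro ⟨_, h⟩; exact h
      · intro h
        refine ⟨Finset.card_pos.1 ?_, h⟩
        omega
    have hcnt : (T.filter (fun S => S.card = i)).card = k.choose i := by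
      rw [hTf, ← Finset.powerset_univ, ← Finset.powersetCard_eq_filter,
        Finset.card_powersetCard, Finset.card_univ, Fintype.card_fin]
    rw [hcnt, nsmul_eq_mul]
  have htotal : iidUnif k ((cntSet (Fin k) k t)ᶜ) =
      ∑ i ∈ Finset.Icc 1 k, (k.choose i : ENNReal) *
        (ENNReal.ofReal (1 - t (k - i + 1)) ^ i *
          iidUnif (k - i) (cntSet (Fin (k - i)) (k - i) t)) := by
    rw [hsum, hfib]
    exact Finset.sum_congr rfl hinner
  have hE : MeasurableSet (cntSet (Fin k) k t) := measurableSet_cntSet _ _ _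
  have hone : iidUnif k (cntSet (Fin k) k t) + iidUnif k ((cntSet (Fin k) k t)ᶜ) = 1 := by
    rw [measure_add_measure_compl hE, measure_univ]
  have h1 : (iidUnif k (cntSet (Fin k) k t)).toReal
      + (iidUnif k ((cntSet (Fin k) k t)ᶜ)).toReal = 1 := by
    rw [← ENNReal.toReal_add (measure_ne_top _ _) (measure_ne_top _ _), hone,
      ENNReal.toReal_one]
  have hfin : ∀ i ∈ Finset.Icc 1 k,
      (k.choose i : ENNReal) * (ENNReal.ofReal (1 - t (k - i + 1)) ^ i *
        iidUnif (k - i) (cntSet (Fin (k - i)) (k - i) t)) ≠ ⊤ := by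
    intro i _
    exact ENNReal.mul_ne_top (ENNReal.natCast_ne_top _)
      (ENNReal.mul_ne_top (ENNReal.pow_ne_top ENNReal.ofReal_ne_top) (measure_ne_top _ _))
  have h2 : (iidUnif k ((cntSet (Fin k) k t)ᶜ)).toReal =
      ∑ i ∈ Finset.Icc 1 k, (k.choose i : ℝ) * (1 - t (k - i + 1)) ^ i * Psi (k - i) t := by
    rw [htotal, ENNReal.toReal_sum hfin]
    refine Finset.sum_congr rfl fun i hi => ?_
    obtain ⟨hi1, hik⟩ := Finset.mem_Icc.1 hi
    have ht1 : t (k - i + 1) ≤ 1 :=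
      (ht01 (k - i + 1) (Set.mem_Icc.2 ⟨by omega, by omega⟩)).2
    rw [ENNReal.toReal_mul, ENNReal.toReal_mul, ENNReal.toReal_pow,
      ENNReal.toReal_ofReal (by linarith), ENNReal.toReal_natCast, Psi_eq]
    ring
  rw [Psi_eq]
  linarith
end

section
/- Steck's recursion: for any nondecreasing threshold t = (t₁,...,tₖ) ∈ [0,1]^k, Ψₖ(t₁,...,tₖ) = (tₖ)^k − Σ_{j=0}^{k−2} C(k,j) (tₖ − t_{j+1})^{k−j} Ψⱼ(t₁,...,tⱼ). -/
open MeasureTheory Finset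
open scoped Classical

instance inst_s2 : IsProbabilityMeasure unifM := by
  constructor; simp [unifM, Real.volume_Ioo]

instance (k : ℕ) : IsProbabilityMeasure (iidUnif k) :=
  inferInstanceAs (IsProbabilityMeasure (Measure.pi fun _ : Fin k => unifM))

lemma unifM_Iic {c : ℝ} (h0 : 0 ≤ c) (h1 : c ≤ 1) :
    unifM (Set.Iic c) = ENNReal.ofReal c := by
  rw [unifM, Measure.restrict_apply measurableSet_Iic]
  apply le_antisymm
  · calc volume (Set.Iic c ∩ Set.Ioo 0 1)
        ≤ volume (Set.Ioc 0 c) := measure_mono (fun x hx => ⟨hx.2.1, hx.1⟩)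
      _ = ENNReal.ofReal c := by rw [Real.volume_Ioc, sub_zero]
  · calc ENNReal.ofReal c = volume (Set.Ioo 0 c) := by rw [Real.volume_Ioo, sub_zero]
      _ ≤ volume (Set.Iic c ∩ Set.Ioo 0 1) :=
        measure_mono (fun x hx => ⟨le_of_lt hx.2, hx.1, lt_of_lt_of_le hx.2 h1⟩)

lemma unifM_Ioc {a b : ℝ} (h0 : 0 ≤ a) (h1 : b ≤ 1) :
    unifM (Set.Ioc a b) = ENNReal.ofReal (b - a) := by
  rw [unifM, Measure.restrict_apply measurableSet_Ioc]
  apply le_antisymm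
  · calc volume (Set.Ioc a b ∩ Set.Ioo 0 1)
        ≤ volume (Set.Ioc a b) := measure_mono Set.inter_subset_left
      _ = ENNReal.ofReal (b - a) := Real.volume_Ioc
  · calc ENNReal.ofReal (b - a) = volume (Set.Ioo a b) := (Real.volume_Ioo).symm
      _ ≤ volume (Set.Ioc a b ∩ Set.Ioo 0 1) :=
        measure_mono (fun x hx => ⟨⟨hx.1, le_of_lt hx.2⟩,
          lt_of_le_of_lt h0 hx.1, lt_of_lt_of_le hx.2 h1⟩)

def goodSet (ι : Type*) [Fintype ι] (n : ℕ) (t : ℕ → ℝ) : Set (ι → ℝ) :=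
  {x | ∀ j ∈ Finset.Icc 1 n, j ≤ (Finset.univ.filter (fun i : ι => x i ≤ t j)).card}

lemma measurable_cardFilter {ι : Type*} [Fintype ι] (s : Finset ι) (c : ℝ) :
    Measurable fun x : ι → ℝ => (s.filter fun i => x i ≤ c).card := by
  simp only [Finset.card_filter]
  exact Finset.measurable_sum _ fun i _ =>
    Measurable.ite (measurableSet_le (measurable_pi_apply i) measurable_const)
      measurable_const measurable_const

lemma measurableSet_natPred {α : Type*} [MeasurableSpace α] {f : α → ℕ}
    (hf : Measurable f) (P : ℕ → Prop) : MeasurableSet {x | P (f x)} :=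
  hf (show MeasurableSet {n | P n} from trivial)

lemma measurableSet_goodSet (ι : Type*) [Fintype ι] (n : ℕ) (t : ℕ → ℝ) :
    MeasurableSet (goodSet ι n t) := by
  have : goodSet ι n t =
      ⋂ j ∈ (Finset.Icc 1 n : Finset ℕ),
        {x : ι → ℝ | j ≤ (univ.filter fun i => x i ≤ t j).card} := by
    ext x; simp [goodSet]
  rw [this]
  exact MeasurableSet.biInter (Finset.Icc 1 n).countable_toSet
    fun j _ => measurableSet_natPred (measurable_cardFilter univ (t j)) (j ≤ ·)

lemma card_filter_subtype_s2 {ι : Type*} [Fintype ι] (S : Finset ι) (p : ι → Prop)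
    [DecidablePred p] :
    (univ.filter fun i : {i // i ∈ S} => p i.1).card = (S.filter p).card := by
  apply Finset.card_bij (fun a _ => a.1)
  · intro a ha; simp only [mem_filter, mem_univ, true_and] at ha
    exact mem_filter.2 ⟨a.2, ha⟩
  · intro a _ b _ h; exact Subtype.ext h
  · intro b hb
    simp only [mem_filter] at hb
    exact ⟨⟨b, hb.1⟩, by simp [hb.2], rfl⟩

lemma card_filter_equiv_s2 {ι κ : Type*} [Fintype ι] [Fintype κ] (e : ι ≃ κ) (p : κ → Prop)
    [DecidablePred p] :
    (univ.filter fun i : ι => p (e i)).card = (univ.filter p).card := by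
  apply Finset.card_bij (fun a _ => e a)
  · intro a ha; simp only [mem_filter, mem_univ, true_and] at ha ⊢; exact ha
  · intro a _ b _ h; exact e.injective h
  · intro b hb
    simp only [mem_filter, mem_univ, true_and] at hb
    exact ⟨e.symm b, by simp [hb], by simp⟩

lemma pi_goodSet_eq {ι κ : Type*} [Fintype ι] [Fintype κ] (e : ι ≃ κ) (n : ℕ) (t : ℕ → ℝ) :
    Measure.pi (fun _ : κ => unifM) (goodSet κ n t)
      = Measure.pi (fun _ : ι => unifM) (goodSet ι n t) := by
  have h := measurePreserving_piCongrLeft (fun _ : κ => unifM) e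
  rw [← h.measure_preimage (measurableSet_goodSet κ n t).nullMeasurableSet]
  congr 1
  ext x
  have hv : ∀ kk : κ,
      (MeasurableEquiv.piCongrLeft (fun _ : κ => ℝ) e) x kk = x (e.symm kk) := by
    intro kk
    conv_lhs => rw [← e.apply_symm_apply kk]
    rw [MeasurableEquiv.piCongrLeft_apply_apply]
  simp only [goodSet, Set.mem_preimage, Set.mem_setOf_eq, hv]
  have hc : ∀ j : ℕ,
      (univ.filter fun kk : κ => x (e.symm kk) ≤ t j).card
        = (univ.filter fun i : ι => x i ≤ t j).card :=
    fun j => card_filter_equiv_s2 e.symm (fun i => x i ≤ t j)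
  constructor <;> intro h' j hj
  · rw [← hc]; exact h' j hj
  · rw [hc]; exact h' j hj

lemma mem_goodSet_succ {ι : Type*} [Fintype ι] {n : ℕ} {t : ℕ → ℝ} {x : ι → ℝ} :
    x ∈ goodSet ι (n+1) t ↔ x ∈ goodSet ι n t ∧
      (n+1) ≤ (univ.filter fun i : ι => x i ≤ t (n+1)).card := by
  have hins : Finset.Icc 1 (n+1) = insert (n+1) (Finset.Icc 1 n) := by
    ext m; simp only [Finset.mem_Icc, Finset.mem_insert]; omega
  simp only [goodSet, Set.mem_setOf_eq, hins, Finset.forall_mem_insert]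
  tauto

def Tset (k : ℕ) (t : ℕ → ℝ) : Set (Fin k → ℝ) :=
  Set.pi Set.univ fun _ => Set.Iic (t k)

lemma measurableSet_Tset (k : ℕ) (t : ℕ → ℝ) : MeasurableSet (Tset k t) :=
  MeasurableSet.univ_pi fun _ => measurableSet_Iic

def Aset (k : ℕ) (t : ℕ → ℝ) (j : ℕ) : Set (Fin k → ℝ) :=
  (goodSet (Fin k) j t ∩
    {x | (univ.filter fun i : Fin k => x i ≤ t (j+1)).card ≤ j}) ∩ Tset k t

lemma measurableSet_Aset (k : ℕ) (t : ℕ → ℝ) (j : ℕ) : MeasurableSet (Aset k t j) :=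
  ((measurableSet_goodSet _ j t).inter
    (measurableSet_natPred (measurable_cardFilter univ (t (j+1))) (· ≤ j))).inter
    (measurableSet_Tset k t)

def Bset (k : ℕ) (t : ℕ → ℝ) (j : ℕ) (S : Finset (Fin k)) : Set (Fin k → ℝ) :=
  {x | (∀ l ∈ Finset.Icc 1 j, l ≤ (S.filter fun i => x i ≤ t l).card) ∧
    ∀ i ∉ S, x i ∈ Set.Ioc (t (j+1)) (t k)}

lemma Bset_eq_preimage (k : ℕ) (t : ℕ → ℝ) (j : ℕ) (S : Finset (Fin k)) :
    Bset k t j S = (MeasurableEquiv.piEquivPiSubtypeProd (fun _ : Fin k => ℝ) (· ∈ S)) ⁻¹'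
      ((goodSet {i : Fin k // i ∈ S} j t) ×ˢ
        (Set.pi Set.univ fun _ : {i : Fin k // ¬ i ∈ S} => Set.Ioc (t (j+1)) (t k))) := by
  ext x
  simp only [Bset, Set.mem_preimage, Set.mem_prod, Set.mem_setOf_eq,
    MeasurableEquiv.piEquivPiSubtypeProd, MeasurableEquiv.coe_mk,
    Equiv.piEquivPiSubtypeProd_apply, goodSet, Set.mem_univ_pi]
  constructor
  · rintro ⟨h1, h2⟩
    refine ⟨fun l hl => ?_, fun i => h2 i.1 i.2⟩
    rw [card_filter_subtype_s2 S (fun i => x i ≤ t l)]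
    exact h1 l hl
  · rintro ⟨h1, h2⟩
    refine ⟨fun l hl => ?_, fun i hi => h2 ⟨i, hi⟩⟩
    rw [← card_filter_subtype_s2 S (fun i => x i ≤ t l)]
    exact h1 l hl

lemma measurableSet_Bset (k : ℕ) (t : ℕ → ℝ) (j : ℕ) (S : Finset (Fin k)) :
    MeasurableSet (Bset k t j S) := by
  rw [Bset_eq_preimage]
  exact (MeasurableEquiv.piEquivPiSubtypeProd (fun _ : Fin k => ℝ) (· ∈ S)).measurable
    ((measurableSet_goodSet _ j t).prod (MeasurableSet.univ_pi fun _ => measurableSet_Ioc))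

lemma measure_Bset (k : ℕ) (t : ℕ → ℝ) (j : ℕ) (S : Finset (Fin k)) (hS : S.card = j) :
    iidUnif k (Bset k t j S)
      = iidUnif j (goodSet (Fin j) j t) * unifM (Set.Ioc (t (j+1)) (t k)) ^ (k - j) := by
  rw [Bset_eq_preimage, iidUnif,
    (measurePreserving_piEquivPiSubtypeProd (fun _ : Fin k => unifM) (· ∈ S)).measure_preimage
      ((measurableSet_goodSet _ j t).prod
        (MeasurableSet.univ_pi fun _ => measurableSet_Ioc)).nullMeasurableSet,
    Measure.prod_prod, Measure.pi_pi]
  congr 1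
  · have e : Fin j ≃ {i : Fin k // i ∈ S} :=
      (Fintype.equivFinOfCardEq (by rw [Fintype.card_coe, hS])).symm
    have h := @pi_goodSet_eq (Fin j) {x : Fin k // x ∈ S} _ (Subtype.fintype _) e j t
    rw [iidUnif]
    convert h using 2
    congr!
  · rw [Finset.prod_const, Finset.card_univ]
    congr 1
    rw [Fintype.card_subtype_compl, Fintype.card_fin]
    congr 1
    rw [← hS]
    exact Fintype.card_coe S


/-- Steck's recursion for the joint c.d.f. of uniform order statistics. -/
theorem steck (k : ℕ) (hk : 1 ≤ k) (t : ℕ → ℝ)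
    (ht : MonotoneOn t (Set.Icc 1 k))
    (ht01 : ∀ j ∈ Set.Icc 1 k, t j ∈ Set.Icc (0:ℝ) 1) :
    Psi k t = (t k) ^ k - ∑ j ∈ Finset.range (k - 1),
      (k.choose j : ℝ) * (t k - t (j + 1)) ^ (k - j) * Psi j t := by
  have hmt : ∀ a b : ℕ, 1 ≤ a → a ≤ b → b ≤ k → t a ≤ t b := fun a b h1 hab hbk =>
    ht ⟨h1, hab.trans hbk⟩ ⟨h1.trans hab, hbk⟩ hab
  have htk0 : 0 ≤ t k := (ht01 k ⟨hk, le_rfl⟩).1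
  have htk1 : t k ≤ 1 := (ht01 k ⟨hk, le_rfl⟩).2
  -- the key fixed-set property of B sets
  have hBfix : ∀ j, j + 1 ≤ k → ∀ S : Finset (Fin k), S.card = j → ∀ x ∈ Bset k t j S,
      univ.filter (fun i : Fin k => x i ≤ t (j+1)) = S := by
    intro j hjk S hS x hx
    have hSle : ∀ i ∈ S, x i ≤ t (j+1) := by
      intro i hi
      rcases Nat.eq_zero_or_pos j with h0 | hpos
      · exfalso; rw [h0, Finset.card_eq_zero] at hS; rw [hS] at hi; simp at hi
      · have h1 : j ≤ (S.filter fun i => x i ≤ t j).card :=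
          hx.1 j (Finset.mem_Icc.mpr ⟨hpos, le_rfl⟩)
        have hfe : S.filter (fun i => x i ≤ t j) = S :=
          Finset.eq_of_subset_of_card_le (Finset.filter_subset _ _) (by omega)
        have hi' : i ∈ S.filter (fun i => x i ≤ t j) := by rw [hfe]; exact hi
        have hix : x i ≤ t j := (Finset.mem_filter.mp hi').2
        exact hix.trans (hmt j (j+1) hpos (Nat.le_succ j) hjk)
    ext i
    simp only [Finset.mem_filter, Finset.mem_univ, true_and]
    constructor
    · intro hxi
      by_contra hiS
      exact absurd hxi (not_le.mpr (hx.2 i hiS).1)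
    · exact hSle i
  -- decomposition of T
  have hTdecomp : Tset k t = goodSet (Fin k) k t ∪ ⋃ j ∈ Finset.range (k-1), Aset k t j := by
    apply Set.Subset.antisymm
    · intro x hx
      by_cases hF : x ∈ goodSet (Fin k) k t
      · exact Or.inl hF
      · right
        have hP0 : x ∈ goodSet (Fin k) 0 t := by
          intro j hj; simp at hj
        obtain ⟨m, hm, hmk, hnotsucc⟩ : ∃ m, x ∈ goodSet (Fin k) m t ∧ m ≤ k ∧
            (m < k → x ∉ goodSet (Fin k) (m+1) t) := by
          refine ⟨Nat.findGreatest (fun n => x ∈ goodSet (Fin k) n t) k,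
            Nat.findGreatest_spec (P := fun n => x ∈ goodSet (Fin k) n t) (Nat.zero_le k) hP0,
            Nat.findGreatest_le k, fun hlt => ?_⟩
          exact Nat.findGreatest_is_greatest (Nat.lt_succ_self _) hlt
        have hmne : m ≠ k := fun h => hF (by rw [h] at hm; exact hm)
        have hmlt : m < k := lt_of_le_of_ne hmk hmne
        have hnot : x ∉ goodSet (Fin k) (m+1) t := hnotsucc hmlt
        have hcard : (univ.filter fun i : Fin k => x i ≤ t (m+1)).card ≤ m := by
          by_contra hc
          exact hnot (mem_goodSet_succ.mpr ⟨hm, by omega⟩)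
        have hTk : ∀ i, x i ≤ t k := fun i => hx i (Set.mem_univ i)
        have hmne' : m ≠ k - 1 := by
          intro hEq
          have hfu : univ.filter (fun i : Fin k => x i ≤ t (m+1)) = univ :=
            Finset.filter_true_of_mem (fun i _ => by
              have : m + 1 = k := by omega
              rw [this]; exact hTk i)
          rw [hfu, Finset.card_univ, Fintype.card_fin] at hcard
          omega
        have hmr : m < k - 1 := by omega
        refine Set.mem_biUnion (Finset.mem_range.mpr hmr) ?_
        exact ⟨⟨hm, hcard⟩, hx⟩
    · intro x hx
      rcases hx with hF | hA
      · intro i _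
        have hc : k ≤ (univ.filter fun i : Fin k => x i ≤ t k).card :=
          hF k (Finset.mem_Icc.mpr ⟨hk, le_rfl⟩)
        have hfu : univ.filter (fun i : Fin k => x i ≤ t k) = univ :=
          Finset.eq_of_subset_of_card_le (Finset.subset_univ _)
            (by rw [Finset.card_univ, Fintype.card_fin]; exact hc)
        have : i ∈ univ.filter (fun i : Fin k => x i ≤ t k) := by rw [hfu]; exact mem_univ i
        exact (Finset.mem_filter.mp this).2
      · obtain ⟨j, hj, hxj⟩ := Set.mem_iUnion₂.mp hA
        exact hxj.2
  -- disjointness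
  have hdisjFA : ∀ j, j < k - 1 → Disjoint (goodSet (Fin k) k t) (Aset k t j) := by
    intro j hj
    rw [Set.disjoint_left]
    rintro x hF ⟨⟨_, hc⟩, _⟩
    have hc' : (univ.filter fun i : Fin k => x i ≤ t (j+1)).card ≤ j := hc
    have h1 : j + 1 ≤ (univ.filter fun i : Fin k => x i ≤ t (j+1)).card :=
      hF (j+1) (Finset.mem_Icc.mpr ⟨by omega, by omega⟩)
    omega
  have hdisjAA : ∀ j j', j < j' → Disjoint (Aset k t j) (Aset k t j') := by
    intro j j' hjj
    rw [Set.disjoint_left]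
    rintro x ⟨⟨_, hc⟩, _⟩ ⟨⟨hg', _⟩, _⟩
    have hc' : (univ.filter fun i : Fin k => x i ≤ t (j+1)).card ≤ j := hc
    have h1 : j + 1 ≤ (univ.filter fun i : Fin k => x i ≤ t (j+1)).card :=
      hg' (j+1) (Finset.mem_Icc.mpr ⟨by omega, by omega⟩)
    omega
  -- splitting the measure
  have hsplit : iidUnif k (Tset k t) = iidUnif k (goodSet (Fin k) k t)
      + ∑ j ∈ Finset.range (k-1), iidUnif k (Aset k t j) := by
    rw [hTdecomp, measure_union ?hd ?hm, measure_biUnion_finset ?hp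
      (fun j _ => measurableSet_Aset k t j)]
    case hd =>
      rw [Set.disjoint_iUnion₂_right]
      intro j hj
      exact hdisjFA j (Finset.mem_range.mp hj)
    case hm =>
      exact MeasurableSet.biUnion (Finset.range (k-1)).countable_toSet
        (fun j _ => measurableSet_Aset k t j)
    case hp =>
      intro a ha b hb hab
      rcases lt_or_gt_of_ne hab with h | h
      · exact hdisjAA a b h
      · exact (hdisjAA b a h).symm
  -- A as union of B's
  have hAunion : ∀ j, j < k - 1 →
      Aset k t j = ⋃ S ∈ Finset.powersetCard j (univ : Finset (Fin k)), Bset k t j S := by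
    intro j hj
    have hjk : j + 1 ≤ k := by omega
    ext x
    rw [Set.mem_iUnion₂]
    constructor
    · rintro ⟨⟨hg, hc⟩, hT⟩
      have hge : j ≤ (univ.filter fun i : Fin k => x i ≤ t (j+1)).card := by
        rcases Nat.eq_zero_or_pos j with h0 | hpos
        · omega
        · have h1 : j ≤ (univ.filter fun i : Fin k => x i ≤ t j).card :=
            hg j (Finset.mem_Icc.mpr ⟨hpos, le_rfl⟩)
          have hsub : univ.filter (fun i : Fin k => x i ≤ t j)
              ⊆ univ.filter (fun i : Fin k => x i ≤ t (j+1)) :=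
            Finset.monotone_filter_right univ
              (fun i _ (hi : x i ≤ t j) => hi.trans (hmt j (j+1) hpos (Nat.le_succ _) hjk))
          exact h1.trans (Finset.card_le_card hsub)
      have hcard : (univ.filter fun i : Fin k => x i ≤ t (j+1)).card = j :=
        le_antisymm hc hge
      refine ⟨univ.filter (fun i : Fin k => x i ≤ t (j+1)),
        Finset.mem_powersetCard_univ.mpr hcard, ?_, ?_⟩
      · intro l hl
        obtain ⟨hl1, hlj⟩ := Finset.mem_Icc.mp hl
        have hfe : (univ.filter (fun i : Fin k => x i ≤ t (j+1))).filter
            (fun i => x i ≤ t l) = univ.filter (fun i : Fin k => x i ≤ t l) := by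
          ext i
          simp only [Finset.mem_filter, Finset.mem_univ, true_and]
          constructor
          · rintro ⟨_, h2⟩; exact h2
          · intro h2; exact ⟨h2.trans (hmt l (j+1) hl1 (by omega) hjk), h2⟩
        rw [hfe]
        exact hg l hl
      · intro i hi
        simp only [Finset.mem_filter, Finset.mem_univ, true_and, not_le] at hi
        exact ⟨hi, hT i (Set.mem_univ i)⟩
    · rintro ⟨S, hSmem, hB⟩
      have hScard : S.card = j := Finset.mem_powersetCard_univ.mp hSmem
      have hfix := hBfix j hjk S hScard x hB
      refine ⟨⟨?_, ?_⟩, ?_⟩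
      · intro l hl
        calc l ≤ (S.filter fun i => x i ≤ t l).card := hB.1 l hl
          _ ≤ (univ.filter fun i : Fin k => x i ≤ t l).card :=
            Finset.card_le_card (Finset.filter_subset_filter _ (Finset.subset_univ S))
      · show (univ.filter fun i : Fin k => x i ≤ t (j+1)).card ≤ j
        rw [hfix, hScard]
      · intro i _
        by_cases hiS : i ∈ S
        · rw [← hfix] at hiS
          exact (Finset.mem_filter.mp hiS).2.trans (hmt (j+1) k (by omega) hjk le_rfl)
        · exact (hB.2 i hiS).2
  -- measure of each A
  have hAmeasure : ∀ j, j < k - 1 → iidUnif k (Aset k t j)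
      = (k.choose j : ENNReal) * (ENNReal.ofReal (t k - t (j+1)))^(k-j)
        * iidUnif j (goodSet (Fin j) j t) := by
    intro j hj
    have hjk : j + 1 ≤ k := by omega
    have ht0j : 0 ≤ t (j+1) := (ht01 (j+1) ⟨by omega, hjk⟩).1
    have htjtk : t (j+1) ≤ t k := hmt (j+1) k (by omega) hjk le_rfl
    rw [hAunion j hj, measure_biUnion_finset ?hd (fun S _ => measurableSet_Bset k t j S)]
    case hd =>
      intro S hS S' hS' hne
      rw [Function.onFun, Set.disjoint_left]
      intro x hxS hxS'
      apply hne
      rw [← hBfix j hjk S (Finset.mem_powersetCard_univ.mp hS) x hxS,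
        ← hBfix j hjk S' (Finset.mem_powersetCard_univ.mp hS') x hxS']
    have heach : ∀ S ∈ Finset.powersetCard j (univ : Finset (Fin k)),
        iidUnif k (Bset k t j S)
          = iidUnif j (goodSet (Fin j) j t) * (ENNReal.ofReal (t k - t (j+1)))^(k-j) := by
      intro S hS
      rw [measure_Bset k t j S (Finset.mem_powersetCard_univ.mp hS),
        unifM_Ioc ht0j htk1]
    rw [Finset.sum_congr rfl heach, Finset.sum_const, Finset.card_powersetCard,
      Finset.card_univ, Fintype.card_fin, nsmul_eq_mul]
    ring
  -- measure of T
  have hT : iidUnif k (Tset k t) = (ENNReal.ofReal (t k))^k := by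
    rw [Tset, iidUnif, Measure.pi_pi]
    simp [unifM_Iic htk0 htk1, Finset.prod_const]
  -- put together
  have key : (ENNReal.ofReal (t k))^k = iidUnif k (goodSet (Fin k) k t)
      + ∑ j ∈ Finset.range (k-1), ((k.choose j : ENNReal)
        * (ENNReal.ofReal (t k - t (j+1)))^(k-j) * iidUnif j (goodSet (Fin j) j t)) := by
    rw [← hT, hsplit]
    congr 1
    exact Finset.sum_congr rfl fun j hj => hAmeasure j (Finset.mem_range.mp hj)
  -- term finiteness
  have htermfin : ∀ j ∈ Finset.range (k-1), (k.choose j : ENNReal)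
      * (ENNReal.ofReal (t k - t (j+1)))^(k-j) * iidUnif j (goodSet (Fin j) j t) ≠ ⊤ :=
    fun j _ => ENNReal.mul_ne_top
      (ENNReal.mul_ne_top (ENNReal.natCast_ne_top _)
        (ENNReal.pow_ne_top ENNReal.ofReal_ne_top))
      (measure_ne_top _ _)
  have h1 := congrArg ENNReal.toReal key
  rw [ENNReal.toReal_add (measure_ne_top _ _) (ENNReal.sum_ne_top.mpr htermfin),
    ENNReal.toReal_sum htermfin, ENNReal.toReal_pow, ENNReal.toReal_ofReal htk0] at h1
  have hsum : ∀ j ∈ Finset.range (k-1),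
      ((k.choose j : ENNReal) * (ENNReal.ofReal (t k - t (j+1)))^(k-j)
        * iidUnif j (goodSet (Fin j) j t)).toReal
      = (k.choose j : ℝ) * (t k - t (j+1)) ^ (k-j) * Psi j t := by
    intro j hj
    have hjk : j + 1 ≤ k := by
      have := Finset.mem_range.mp hj; omega
    have htjtk : t (j+1) ≤ t k := hmt (j+1) k (by omega) hjk le_rfl
    rw [ENNReal.toReal_mul, ENNReal.toReal_mul, ENNReal.toReal_pow,
      ENNReal.toReal_ofReal (by linarith), ENNReal.toReal_natCast]
    rfl
  rw [Finset.sum_congr rfl hsum] at h1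
  have hPsik : Psi k t = (iidUnif k (goodSet (Fin k) k t)).toReal := rfl
  rw [hPsik]
  linarith [h1]
end

section
/- Step-up invariance lemma: Consider a step-up procedure with nondecreasing threshold t = (t₁,...,tₘ) applied to p-values p₁,...,pₘ, rejecting k̂ = max{k ∈ {0,...,m} : |{j : pⱼ ≤ tₖ}| ≥ k} hypotheses. For a fixed 1 ≤ ℓ ≤ m, let k̂'₍ℓ₎ be the rejection number of the step-up procedure with threshold (t_{j+ℓ})_{1≤j≤m−ℓ} applied to p_{ℓ+1},...,pₘ. Then pointwise the following three statements are equivalent: (i) pᵢ ≤ t_{k̂} for all 1 ≤ i ≤ ℓ; (ii) pᵢ ≤ t_{k̂'₍ℓ₎+ℓ} for all 1 ≤ i ≤ ℓ; (iii) k̂ = k̂'₍ℓ₎ + ℓ. -/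
open Finset
open scoped Classical

/-- Rejection number of the step-up procedure with threshold `t` (1-indexed,
`t 0 = 0` by convention) applied to the p-values `p 1, ..., p m`:
the largest `k ≤ m` with `#{j ∈ {1,...,m} : p j ≤ t k} ≥ k`. -/
noncomputable def kSU (m : ℕ) (t : ℕ → ℝ) (p : ℕ → ℝ) : ℕ :=
  Nat.findGreatest (fun k => k ≤ ((Finset.Icc 1 m).filter (fun j => p j ≤ t k)).card) m

/-- Step-up invariance lemma: with `k̂` the rejection number of `SU(t)` on `p₁,...,pₘ` and
`k̂'` the rejection number of the step-up procedure with threshold `(t_{j+ℓ})_{1≤j≤m-ℓ}`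
applied to `p_{ℓ+1},...,pₘ`, the following are equivalent:
(i) `pᵢ ≤ t k̂` for all `1 ≤ i ≤ ℓ`; (ii) `pᵢ ≤ t (k̂'+ℓ)` for all `1 ≤ i ≤ ℓ`;
(iii) `k̂ = k̂' + ℓ`. -/
theorem stepup_invariance (m ℓ : ℕ) (hℓ : 1 ≤ ℓ) (hℓm : ℓ ≤ m)
    (t p : ℕ → ℝ) (ht0 : t 0 = 0) (ht : MonotoneOn t (Set.Icc 0 m)) :
    ((∀ i ∈ Finset.Icc 1 ℓ, p i ≤ t (kSU m t p)) ↔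
      (∀ i ∈ Finset.Icc 1 ℓ,
        p i ≤ t (kSU (m - ℓ) (fun k => t (k + ℓ)) (fun j => p (j + ℓ)) + ℓ)))
    ∧
    ((∀ i ∈ Finset.Icc 1 ℓ, p i ≤ t (kSU m t p)) ↔
      kSU m t p = kSU (m - ℓ) (fun k => t (k + ℓ)) (fun j => p (j + ℓ)) + ℓ) := by
  set n := m - ℓ with hn
  have hnm : n + ℓ = m := by omega
  set K := kSU m t p with hK
  set K' := kSU n (fun k => t (k + ℓ)) (fun j => p (j + ℓ)) with hK'
  -- t is monotone as used
  have htmono : ∀ c c' : ℕ, c ≤ c' → c' ≤ m → t c ≤ t c' := fun c c' h h' =>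
    ht ⟨Nat.zero_le _, by exact_mod_cast le_trans h h'⟩ ⟨Nat.zero_le _, by exact_mod_cast h'⟩
      (by exact_mod_cast h)
  set A : ℕ → ℕ := fun c => ((Finset.Icc 1 ℓ).filter (fun j => p j ≤ t c)).card with hA
  set B : ℕ → ℕ := fun c => ((Finset.Icc (ℓ+1) m).filter (fun j => p j ≤ t c)).card with hB
  have hAle : ∀ c, A c ≤ ℓ := by
    intro c
    calc A c ≤ (Finset.Icc 1 ℓ).card := Finset.card_filter_le _ _
    _ = ℓ := by rw [Nat.card_Icc]; omega
  have hBle : ∀ c, B c ≤ n := by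
    intro c
    calc B c ≤ (Finset.Icc (ℓ+1) m).card := Finset.card_filter_le _ _
    _ = n := by rw [Nat.card_Icc]; omega
  -- split
  have split : ∀ c, ((Finset.Icc 1 m).filter (fun j => p j ≤ t c)).card = A c + B c := by
    intro c
    have hu : Finset.Icc 1 m = Finset.Icc 1 ℓ ∪ Finset.Icc (ℓ+1) m := by
      ext x; simp only [Finset.mem_union, Finset.mem_Icc]; omega
    have hd : Disjoint ((Finset.Icc 1 ℓ).filter (fun j => p j ≤ t c))
        ((Finset.Icc (ℓ+1) m).filter (fun j => p j ≤ t c)) := by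
      rw [Finset.disjoint_left]
      intro a ha hb
      simp only [Finset.mem_filter, Finset.mem_Icc] at ha hb
      omega
    rw [hu, Finset.filter_union, Finset.card_union_of_disjoint hd]
  -- reindexing
  have reindex : ∀ c : ℕ,
      ((Finset.Icc 1 n).filter (fun j => p (j + ℓ) ≤ t c)).card = B c := by
    intro c
    apply Finset.card_nbij' (fun j => j + ℓ) (fun j => j - ℓ)
    · intro a ha
      simp only [Finset.coe_filter, Finset.mem_coe, Set.mem_setOf_eq, Finset.mem_filter, Finset.mem_Icc] at ha ⊢
      exact ⟨⟨by omega, by omega⟩, ha.2⟩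
    · intro a ha
      simp only [Finset.coe_filter, Finset.mem_coe, Set.mem_setOf_eq, Finset.mem_filter, Finset.mem_Icc] at ha ⊢
      refine ⟨⟨by omega, by omega⟩, ?_⟩
      have : a - ℓ + ℓ = a := by omega
      rw [this]; exact ha.2
    · intro a _; dsimp only; omega
    · intro a ha
      simp only [Finset.coe_filter, Finset.mem_coe, Set.mem_setOf_eq, Finset.mem_filter, Finset.mem_Icc] at ha
      dsimp only
      omega
  -- basic findGreatest facts
  have hKle : K ≤ m := Nat.findGreatest_le m
  have hK'le : K' ≤ n := Nat.findGreatest_le n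
  have hKspec : K ≤ A K + B K := by
    have := Nat.findGreatest_spec (P := fun k =>
        k ≤ ((Finset.Icc 1 m).filter (fun j => p j ≤ t k)).card)
      (Nat.zero_le m) (Nat.zero_le _)
    have h2 : K ≤ ((Finset.Icc 1 m).filter (fun j => p j ≤ t K)).card := this
    rwa [split] at h2
  have hKmax : ∀ k, K < k → k ≤ m → ¬ (k ≤ A k + B k) := by
    intro k hk hkm h
    have h2 : k ≤ ((Finset.Icc 1 m).filter (fun j => p j ≤ t k)).card := by rwa [split]
    exact Nat.findGreatest_is_greatest (P := fun k =>
        k ≤ ((Finset.Icc 1 m).filter (fun j => p j ≤ t k)).card) hk hkm h2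
  have hK'spec : K' ≤ B (K' + ℓ) := by
    have := Nat.findGreatest_spec (P := fun k =>
        k ≤ ((Finset.Icc 1 n).filter (fun j => p (j + ℓ) ≤ t (k + ℓ))).card)
      (Nat.zero_le n) (Nat.zero_le _)
    have h2 : K' ≤ ((Finset.Icc 1 n).filter (fun j => p (j + ℓ) ≤ t (K' + ℓ))).card := this
    rwa [reindex] at h2
  have hK'max : ∀ k, K' < k → k ≤ n → B (k + ℓ) < k := by
    intro k hk hkn
    have := Nat.findGreatest_is_greatest (P := fun k =>
        k ≤ ((Finset.Icc 1 n).filter (fun j => p (j + ℓ) ≤ t (k + ℓ))).card) hk hkn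
    have h2 : ¬ k ≤ ((Finset.Icc 1 n).filter (fun j => p (j + ℓ) ≤ t (k + ℓ))).card := this
    rw [reindex] at h2
    omega
  have hBmono : ∀ c c', c ≤ c' → c' ≤ m → B c ≤ B c' := by
    intro c c' h h'
    apply Finset.card_le_card
    intro x hx
    simp only [Finset.mem_filter] at hx ⊢
    exact ⟨hx.1, le_trans hx.2 (htmono c c' h h')⟩
  -- key: B (K'+ℓ) = K'
  have hBK' : B (K' + ℓ) = K' := by
    rcases eq_or_lt_of_le hK'le with h | h
    · have := hBle (K' + ℓ); omega
    · have h1 := hK'max (K' + 1) (by omega) (by omega)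
      have h2 := hBmono (K' + ℓ) (K' + 1 + ℓ) (by omega) (by omega)
      omega
  -- A c = ℓ iff all small p-values below threshold
  have hAiff : ∀ c, ℓ ≤ A c ↔ ∀ i ∈ Finset.Icc 1 ℓ, p i ≤ t c := by
    intro c
    constructor
    · intro h i hi
      have hcard : A c = (Finset.Icc 1 ℓ).card := le_antisymm (Finset.card_filter_le _ _)
        (by rw [Nat.card_Icc]; omega)
      have := Finset.eq_of_subset_of_card_le (Finset.filter_subset _ _) (le_of_eq hcard.symm)
      have hi' : i ∈ (Finset.Icc 1 ℓ).filter (fun j => p j ≤ t c) := by rw [this]; exact hi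
      exact (Finset.mem_filter.1 hi').2
    · intro h
      have : (Finset.Icc 1 ℓ).filter (fun j => p j ≤ t c) = Finset.Icc 1 ℓ :=
        Finset.filter_eq_self.2 h
      simp only [hA, this, Nat.card_Icc]
      omega
  -- (iii) → (i)
  have step1 : K = K' + ℓ → ∀ i ∈ Finset.Icc 1 ℓ, p i ≤ t K := by
    intro h
    have h1 := hKspec
    rw [h] at h1
    have hb := hBK'
    have ha := hAle (K' + ℓ)
    have h2 : ℓ ≤ A (K' + ℓ) := by omega
    have h3 := (hAiff (K' + ℓ)).1 h2
    intro i hi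
    rw [h]
    exact h3 i hi
  -- (i) → (iii)
  have step2 : (∀ i ∈ Finset.Icc 1 ℓ, p i ≤ t K) → K = K' + ℓ := by
    intro h
    have hKℓ : ℓ ≤ K := by
      by_contra hc
      push_neg at hc
      have hP : ℓ ≤ ((Finset.Icc 1 m).filter (fun j => p j ≤ t ℓ)).card := by
        rw [split]
        have : ℓ ≤ A ℓ := (hAiff ℓ).2 (fun i hi => le_trans (h i hi)
          (htmono K ℓ (le_of_lt hc) hℓm))
        omega
      have h4 : ℓ ≤ K := Nat.le_findGreatest (P := fun k =>
        k ≤ ((Finset.Icc 1 m).filter (fun j => p j ≤ t k)).card) hℓm hP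
      omega
    have hAK : ℓ ≤ A K := (hAiff K).2 h
    have hle : K - ℓ ≤ K' := by
      have hQ : K - ℓ ≤ ((Finset.Icc 1 n).filter (fun j => p (j + ℓ) ≤ t (K - ℓ + ℓ))).card := by
        rw [reindex]
        have hKK : K - ℓ + ℓ = K := by omega
        rw [hKK]
        have := hAle K
        omega
      exact Nat.le_findGreatest (P := fun k =>
        k ≤ ((Finset.Icc 1 n).filter (fun j => p (j + ℓ) ≤ t (k + ℓ))).card) (by omega) hQ
    have hge : K' + ℓ ≤ K := by
      have hP : K' + ℓ ≤ ((Finset.Icc 1 m).filter (fun j => p j ≤ t (K' + ℓ))).card := by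
        rw [split, hBK']
        have : ℓ ≤ A (K' + ℓ) := (hAiff (K' + ℓ)).2 (fun i hi =>
          le_trans (h i hi) (htmono K (K' + ℓ) (by omega) (by omega)))
        omega
      exact Nat.le_findGreatest (P := fun k =>
        k ≤ ((Finset.Icc 1 m).filter (fun j => p j ≤ t k)).card) (by omega) hP
    omega
  -- (ii) → (iii)
  have step4 : (∀ i ∈ Finset.Icc 1 ℓ, p i ≤ t (K' + ℓ)) → K = K' + ℓ := by
    intro h
    have hge : K' + ℓ ≤ K := by
      have hP : K' + ℓ ≤ ((Finset.Icc 1 m).filter (fun j => p j ≤ t (K' + ℓ))).card := by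
        rw [split, hBK']
        have : ℓ ≤ A (K' + ℓ) := (hAiff (K' + ℓ)).2 h
        omega
      exact Nat.le_findGreatest (P := fun k =>
        k ≤ ((Finset.Icc 1 m).filter (fun j => p j ≤ t k)).card) (by omega) hP
    exact step2 (fun i hi => le_trans (h i hi) (htmono (K' + ℓ) K hge hKle))
  constructor
  · constructor
    · intro h
      have h3 := step2 h
      rw [← h3]; exact h
    · intro h
      have h3 := step4 h
      rw [h3]; exact h
  · exact ⟨step2, step1⟩
end

section
/- Step-down invariance lemma: Consider a step-down procedure with nondecreasing threshold t = (t₁,...,tₘ) applied to p-values p₁,...,pₘ, rejecting k̃ hypotheses. Let k̃₍₁₎ (resp. k̃'₍₁₎) be the rejection number of the step-down procedure with threshold (tⱼ)_{1≤j≤m−1} (resp. (t_{j+1})_{1≤j≤m−1}) applied to p₂,...,pₘ. Then pointwise: p₁ ≤ t_{k̃} ⟺ p₁ ≤ t_{k̃₍₁₎+1} ⟺ k̃ = k̃'₍₁₎ + 1. -/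
open Finset
open scoped Classical

/-- Rejection number of the step-down procedure with threshold `t` (1-indexed,
`t 0 = 0` by convention) applied to the p-values `p 1, ..., p m`:
the largest `k ≤ m` with `#{j ∈ {1,...,m} : p j ≤ t k'} ≥ k'` for all `k' ≤ k`. -/
noncomputable def kSD (m : ℕ) (t : ℕ → ℝ) (p : ℕ → ℝ) : ℕ :=
  Nat.findGreatest
    (fun k => ∀ k' ∈ Finset.Icc 1 k,
      k' ≤ ((Finset.Icc 1 m).filter (fun j => p j ≤ t k')).card) m

lemma kSD_le (m : ℕ) (t p : ℕ → ℝ) : kSD m t p ≤ m := by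
  letI : DecidablePred (fun k => ∀ k' ∈ Finset.Icc 1 k,
      k' ≤ ((Finset.Icc 1 m).filter (fun j => p j ≤ t k')).card) :=
    fun _ => Classical.propDecidable _
  exact Nat.findGreatest_le m

lemma kSD_spec (m : ℕ) (t p : ℕ → ℝ) :
    ∀ k' ∈ Finset.Icc 1 (kSD m t p),
      k' ≤ ((Finset.Icc 1 m).filter (fun j => p j ≤ t k')).card := by
  letI : DecidablePred (fun k => ∀ k' ∈ Finset.Icc 1 k,
      k' ≤ ((Finset.Icc 1 m).filter (fun j => p j ≤ t k')).card) :=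
    fun _ => Classical.propDecidable _
  exact Nat.findGreatest_spec (P := fun k => ∀ k' ∈ Finset.Icc 1 k,
      k' ≤ ((Finset.Icc 1 m).filter (fun j => p j ≤ t k')).card) (m := 0) (Nat.zero_le m)
    (by intro k' hk'; rw [Finset.mem_Icc] at hk'; omega)

lemma kSD_ge (m : ℕ) (t p : ℕ → ℝ) (k : ℕ) (hk : k ≤ m)
    (h : ∀ k' ∈ Finset.Icc 1 k,
      k' ≤ ((Finset.Icc 1 m).filter (fun j => p j ≤ t k')).card) :
    k ≤ kSD m t p := by
  letI : DecidablePred (fun k => ∀ k' ∈ Finset.Icc 1 k,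
      k' ≤ ((Finset.Icc 1 m).filter (fun j => p j ≤ t k')).card) :=
    fun _ => Classical.propDecidable _
  exact Nat.le_findGreatest hk h

/-- Step-down invariance lemma: with `k̃` the rejection number of `SD(t)` on `p₁,...,pₘ`,
`k̃₍₁₎` that of the step-down procedure with threshold `(tⱼ)_{1≤j≤m-1}` on `p₂,...,pₘ`, and
`k̃'₍₁₎` that of the step-down procedure with threshold `(t_{j+1})_{1≤j≤m-1}` on `p₂,...,pₘ`:
`p₁ ≤ t k̃ ↔ p₁ ≤ t (k̃₍₁₎+1) ↔ k̃ = k̃'₍₁₎ + 1`. -/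
theorem stepdown_invariance (m : ℕ) (hm : 1 ≤ m)
    (t p : ℕ → ℝ) (ht0 : t 0 = 0) (ht : MonotoneOn t (Set.Icc 0 m)) :
    ((p 1 ≤ t (kSD m t p)) ↔
      (p 1 ≤ t (kSD (m - 1) t (fun j => p (j + 1)) + 1)))
    ∧
    ((p 1 ≤ t (kSD m t p)) ↔
      kSD m t p = kSD (m - 1) (fun k => t (k + 1)) (fun j => p (j + 1)) + 1) := by
  classical
  set N : ℕ → ℕ := fun k => ((Finset.Icc 1 m).filter (fun j => p j ≤ t k)).card with hNdef
  set M : ℕ → ℕ := fun k => ((Finset.Icc 1 (m-1)).filter (fun j => p (j+1) ≤ t k)).card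
    with hMdef
  -- monotonicity of t as a plain statement
  have htm : ∀ i j : ℕ, i ≤ j → j ≤ m → t i ≤ t j := fun i j hij hjm =>
    ht ⟨Nat.zero_le _, by exact_mod_cast le_trans hij hjm⟩ ⟨Nat.zero_le _, by exact_mod_cast hjm⟩ hij
  -- splitting the count
  have hsplit : ∀ k, N k = M k + (if p 1 ≤ t k then 1 else 0) := by
    intro k
    have himg : (Finset.Icc 2 m).filter (fun j => p j ≤ t k)
        = ((Finset.Icc 1 (m-1)).filter (fun j => p (j+1) ≤ t k)).image (· + 1) := by
      ext x
      simp only [Finset.mem_image, Finset.mem_filter, Finset.mem_Icc]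
      constructor
      · rintro ⟨⟨h2, hmx⟩, hp⟩
        exact ⟨x - 1, ⟨⟨by omega, by omega⟩,
          by rw [Nat.sub_add_cancel (by omega)]; exact hp⟩, by omega⟩
      · rintro ⟨y, ⟨⟨hy1, hy2⟩, hp⟩, rfl⟩
        exact ⟨⟨by omega, by omega⟩, hp⟩
    have hins : Finset.Icc 1 m = insert 1 (Finset.Icc 2 m) := by
      ext x; simp only [Finset.mem_insert, Finset.mem_Icc]; omega
    have h1notin : (1:ℕ) ∉ (Finset.Icc 2 m).filter (fun j => p j ≤ t k) := by
      simp
    have hcard2 : ((Finset.Icc 2 m).filter (fun j => p j ≤ t k)).card = M k := by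
      rw [himg, Finset.card_image_of_injective _ (add_left_injective 1)]
    by_cases hp1 : p 1 ≤ t k
    · show ((Finset.Icc 1 m).filter (fun j => p j ≤ t k)).card = _
      rw [hins, Finset.filter_insert, if_pos hp1,
        Finset.card_insert_of_notMem h1notin, hcard2, if_pos hp1]
    · show ((Finset.Icc 1 m).filter (fun j => p j ≤ t k)).card = _
      rw [hins, Finset.filter_insert, if_neg hp1, hcard2, if_neg hp1]
      omega
  have hNlow : ∀ k, M k ≤ N k := fun k =>
    le_trans (Nat.le_add_right (M k) _) (hsplit k).ge
  have hNupp : ∀ k, N k ≤ M k + 1 := by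
    intro k
    have h := hsplit k
    have : (if p 1 ≤ t k then 1 else 0) ≤ 1 := by split <;> omega
    omega
  have hMmono : ∀ i j : ℕ, i ≤ j → j ≤ m → M i ≤ M j := fun i j hij hjm =>
    Finset.card_le_card (Finset.monotone_filter_right _
      (fun x _ hx => le_trans hx (htm i j hij hjm)))
  set K := kSD m t p with hK
  set A := kSD (m-1) t (fun j => p (j+1)) with hA
  set B := kSD (m-1) (fun k => t (k+1)) (fun j => p (j+1)) with hB
  have hKm : K ≤ m := kSD_le m t p
  have hAm : A ≤ m - 1 := kSD_le (m-1) t _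
  have hBm : B ≤ m - 1 := kSD_le (m-1) _ _
  have hKspec : ∀ k', 1 ≤ k' → k' ≤ K → k' ≤ N k' := fun k' h1 h2 =>
    kSD_spec m t p k' (Finset.mem_Icc.mpr ⟨h1, h2⟩)
  have hAspec : ∀ k', 1 ≤ k' → k' ≤ A → k' ≤ M k' := fun k' h1 h2 =>
    kSD_spec (m-1) t (fun j => p (j+1)) k' (Finset.mem_Icc.mpr ⟨h1, h2⟩)
  have hBspec : ∀ k', 1 ≤ k' → k' ≤ B → k' ≤ M (k'+1) := fun k' h1 h2 =>
    kSD_spec (m-1) (fun k => t (k+1)) (fun j => p (j+1)) k' (Finset.mem_Icc.mpr ⟨h1, h2⟩)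
  have hKge : ∀ k, k ≤ m → (∀ k', 1 ≤ k' → k' ≤ k → k' ≤ N k') → k ≤ K := by
    intro k hk h
    exact kSD_ge m t p k hk (fun k' hk' =>
      h k' (Finset.mem_Icc.mp hk').1 (Finset.mem_Icc.mp hk').2)
  have hAge : ∀ k, k ≤ m - 1 → (∀ k', 1 ≤ k' → k' ≤ k → k' ≤ M k') → k ≤ A := by
    intro k hk h
    exact kSD_ge (m-1) t (fun j => p (j+1)) k hk (fun k' hk' =>
      h k' (Finset.mem_Icc.mp hk').1 (Finset.mem_Icc.mp hk').2)
  have hBge : ∀ k, k ≤ m - 1 → (∀ k', 1 ≤ k' → k' ≤ k → k' ≤ M (k'+1)) → k ≤ B := by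
    intro k hk h
    exact kSD_ge (m-1) (fun k => t (k+1)) (fun j => p (j+1)) k hk (fun k' hk' =>
      h k' (Finset.mem_Icc.mp hk').1 (Finset.mem_Icc.mp hk').2)
  -- Fact 1 : K ≤ B + 1
  have fact1 : K ≤ B + 1 := by
    rcases Nat.eq_zero_or_pos K with h0 | hpos
    · omega
    · have hKB : K - 1 ≤ B := by
        apply hBge (K-1) (by omega)
        intro k' h1 h2
        have h3 := hKspec (k'+1) (by omega) (by omega)
        have h4 := hNupp (k'+1)
        omega
      omega
  -- Fact 2 : p 1 ≤ t (A+1) → A + 1 ≤ K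
  have fact2 : p 1 ≤ t (A+1) → A + 1 ≤ K := by
    intro hp1
    apply hKge (A+1) (by omega)
    intro k' h1 h2
    rcases lt_or_eq_of_le h2 with hlt | heq
    · have h3 := hAspec k' h1 (by omega)
      have h4 := hNlow k'
      omega
    · subst heq
      have hMa : A ≤ M A := by
        rcases Nat.eq_zero_or_pos A with h | h
        · omega
        · exact hAspec A h le_rfl
      have hmono : M A ≤ M (A+1) := hMmono A (A+1) (by omega) (by omega)
      have hs := hsplit (A+1)
      rw [if_pos hp1] at hs
      omega
  -- Fact 3 : p 1 ≤ t K → p 1 ≤ t (A+1)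
  have fact3 : p 1 ≤ t K → p 1 ≤ t (A+1) := by
    intro hp1
    by_contra h
    push_neg at h
    have hKgt : A + 2 ≤ K := by
      by_contra hle
      push_neg at hle
      have : t K ≤ t (A+1) := htm K (A+1) (by omega) (by omega)
      linarith
    have : A + 1 ≤ A := by
      apply hAge (A+1) (by omega)
      intro k' h1 h2
      have hNk : k' ≤ N k' := hKspec k' h1 (by omega)
      have ht' : t k' ≤ t (A+1) := htm k' (A+1) (by omega) (by omega)
      have hs := hsplit k'
      rw [if_neg (by linarith : ¬ p 1 ≤ t k')] at hs
      omega
    omega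
  -- Fact 4 : p 1 ≤ t K → K = B + 1
  have fact4 : p 1 ≤ t K → K = B + 1 := by
    intro hp1
    by_contra hne
    have hKB : K ≤ B := by omega
    have : B + 1 ≤ K := by
      apply hKge (B+1) (by omega)
      intro k' hk1 hk2
      by_cases hc : k' ≤ K
      · exact hKspec k' hk1 hc
      · push_neg at hc
        have hptk : p 1 ≤ t k' := le_trans hp1 (htm K k' (by omega) (by omega))
        have hs := hsplit k'
        rw [if_pos hptk] at hs
        rcases Nat.lt_or_ge k' 2 with h2 | h2
        · omega
        · have h3 := hBspec (k'-1) (by omega) (by omega)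
          have hke : k' - 1 + 1 = k' := by omega
          rw [hke] at h3
          omega
    omega
  -- Fact 5 : K = B + 1 → p 1 ≤ t K
  have fact5 : K = B + 1 → p 1 ≤ t K := by
    intro hKB
    by_contra h
    push_neg at h
    have hNM : ∀ k', k' ≤ K → N k' = M k' := by
      intro k' hk'
      have ht' : t k' ≤ t K := htm k' K hk' hKm
      have hs := hsplit k'
      rw [if_neg (by linarith : ¬ p 1 ≤ t k')] at hs
      omega
    rcases Nat.lt_or_ge K m with hlt | hge
    · have : K ≤ B := by
        apply hBge K (by omega)
        intro k' h1 h2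
        have h3 : k' ≤ N k' := hKspec k' h1 h2
        have h4 : N k' = M k' := hNM k' h2
        have h5 : M k' ≤ M (k'+1) := hMmono k' (k'+1) (by omega) (by omega)
        omega
      omega
    · have hKm' : K = m := le_antisymm hKm hge
      have h1 : m ≤ N m := hKspec m hm (by omega)
      have h2 : N m = M m := hNM m (by omega)
      have hcic : (Finset.Icc 1 (m-1)).card = m - 1 := by rw [Nat.card_Icc]; omega
      have h3 : M m ≤ m - 1 := by
        calc M m ≤ (Finset.Icc 1 (m-1)).card := Finset.card_filter_le _ _
          _ = m - 1 := hcic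
      omega
  refine ⟨⟨fact3, fun hp1 => ?_⟩, fact4, fact5⟩
  exact le_trans hp1 (htm (A+1) K (fact2 hp1) hKm)
end
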